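/- arXiv:1904.02330 — 14 statements merged into one kernel-verified Lean document; each statement's English description precedes it below -/
import Mathlib

section
/- Fix an integer N ≥ 1 and λ ∈ ℝ. In ℝ[[X]] let S_{N,λ} = ∑_{n=0}^{∞} (∏_{i=0}^{n-1} (1 − (N+i)λ)) · (N!/(N+n)!) · X^n and let f = S_{N,λ}^{-1} (the generating function ∑_{n≥0} β_{N,n}(λ) X^n/n! of the hypergeometric degenerate Bernoulli numbers). Define P_n(X) = (N+n)!/N! and Q_n(X) = ((N+n)!/N!) · ∑_{j=0}^{n} (∏_{i=0}^{j-1} (1 − (N+i)λ)) · (N!/(N+j)!) · X^j. Then: (i) for all n ≥ 2, P_n(X) = (N+n + (1−(N+n−1)λ)X) P_{n-1}(X) − (N+n−1)(1−(N+n−1)λ) X P_{n-2}(X), and the same recurrence holds for Q_n; (ii) for all n ≥ 0, Q_n(X) · f ≡ P_n(X) (mod X^{n+1}). -/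
open Finset PowerSeries

/-- Coefficient sequence of `S`. -/
noncomputable def aaS2 (N : ℕ) (l : ℝ) (j : ℕ) : ℝ :=
  (∏ i ∈ Finset.range j, (1 - ((N : ℝ) + i) * l)) *
    ((N.factorial : ℝ) / ((N + j).factorial : ℝ))

/-- The scalar `(N+n)!/N!`. -/
noncomputable def ccS2 (N : ℕ) (n : ℕ) : ℝ :=
  (((N + n).factorial : ℝ) / (N.factorial : ℝ))

/-- Truncation of `S` up to degree `n`. -/
noncomputable def ttS2 (N : ℕ) (l : ℝ) (n : ℕ) : PowerSeries ℝ :=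
  ∑ j ∈ Finset.range (n + 1), PowerSeries.C (aaS2 N l j) * PowerSeries.X ^ j

lemma ccS2_succ (N n : ℕ) : ccS2 N (n + 1) = ((N : ℝ) + n + 1) * ccS2 N n := by
  unfold ccS2
  rw [show N + (n + 1) = (N + n) + 1 from rfl, Nat.factorial_succ]
  push_cast
  ring

lemma ccS2_mul_aaS2 (N : ℕ) (l : ℝ) (j : ℕ) :
    ccS2 N j * aaS2 N l j = ∏ i ∈ Finset.range j, (1 - ((N : ℝ) + i) * l) := by
  unfold ccS2 aaS2
  have h1 : (((N + j).factorial : ℝ)) ≠ 0 := Nat.cast_ne_zero.mpr (Nat.factorial_ne_zero _)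
  have h2 : ((N.factorial : ℝ)) ≠ 0 := Nat.cast_ne_zero.mpr (Nat.factorial_ne_zero _)
  field_simp
  ring_nf
  exact Finset.prod_congr rfl (fun x _ => by ring)

lemma ttS2_succ (N : ℕ) (l : ℝ) (n : ℕ) :
    ttS2 N l (n + 1) = ttS2 N l n + PowerSeries.C (aaS2 N l (n + 1)) * PowerSeries.X ^ (n + 1) := by
  unfold ttS2
  rw [Finset.sum_range_succ]

lemma coeff_ttS2 (N : ℕ) (l : ℝ) (n j : ℕ) (hj : j ≤ n) :
    PowerSeries.coeff j (ttS2 N l n) = aaS2 N l j := by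
  unfold ttS2
  simp only [map_sum, PowerSeries.coeff_C_mul, PowerSeries.coeff_X_pow, mul_ite, mul_one, mul_zero]
  rw [Finset.sum_ite_eq (Finset.range (n + 1)) j (aaS2 N l)]
  simp [Nat.lt_succ_iff, hj]

/-- Continued fraction convergents for the generating function of the
hypergeometric degenerate Bernoulli numbers `β_{N,n}(λ)`.  With
`S = ∑_n (∏_{i=0}^{n-1}(1-(N+i)λ)) · (N!/(N+n)!) · X^n`, `f = S⁻¹`,
`P n = (N+n)!/N!` and `Q n = ((N+n)!/N!) · ∑_{j=0}^n (∏_{i<j}(1-(N+i)λ)) (N!/(N+j)!) X^j`: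
(i) for all `n ≥ 2` (here written at index `n+2`) both `P` and `Q` satisfy the recurrence
`P_n = (N+n + (1-(N+n-1)λ)X) P_{n-1} - (N+n-1)(1-(N+n-1)λ) X P_{n-2}`;
(ii) for all `n ≥ 0`, `Q n · f ≡ P n (mod X^{n+1})`. -/
theorem statement2 (N : ℕ) (hN : 1 ≤ N) (l : ℝ)
    (S f : PowerSeries ℝ)
    (hS : S = PowerSeries.mk fun n =>
      (∏ i ∈ Finset.range n, (1 - ((N : ℝ) + i) * l)) *
        ((N.factorial : ℝ) / ((N + n).factorial : ℝ)))
    (hf : f = S⁻¹)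
    (P Q : ℕ → PowerSeries ℝ)
    (hP : ∀ n, P n = PowerSeries.C (((N + n).factorial : ℝ) / (N.factorial : ℝ)))
    (hQ : ∀ n, Q n = PowerSeries.C (((N + n).factorial : ℝ) / (N.factorial : ℝ)) *
      ∑ j ∈ Finset.range (n + 1),
        PowerSeries.C ((∏ i ∈ Finset.range j, (1 - ((N : ℝ) + i) * l)) *
          ((N.factorial : ℝ) / ((N + j).factorial : ℝ))) * PowerSeries.X ^ j) :
    (∀ n : ℕ,
      P (n + 2) = (PowerSeries.C ((N : ℝ) + n + 2) +
            PowerSeries.C (1 - ((N : ℝ) + n + 1) * l) * PowerSeries.X) * P (n + 1)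
          - PowerSeries.C (((N : ℝ) + n + 1) * (1 - ((N : ℝ) + n + 1) * l)) *
              PowerSeries.X * P n ∧
      Q (n + 2) = (PowerSeries.C ((N : ℝ) + n + 2) +
            PowerSeries.C (1 - ((N : ℝ) + n + 1) * l) * PowerSeries.X) * Q (n + 1)
          - PowerSeries.C (((N : ℝ) + n + 1) * (1 - ((N : ℝ) + n + 1) * l)) *
              PowerSeries.X * Q n) ∧
    (∀ n : ℕ, ∀ k ≤ n,
      PowerSeries.coeff k (Q n * f) = PowerSeries.coeff k (P n)) := by
  have hP' : ∀ n, P n = PowerSeries.C (ccS2 N n) := hP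
  have hQ' : ∀ n, Q n = PowerSeries.C (ccS2 N n) * ttS2 N l n := hQ
  have hSc : ∀ m, PowerSeries.coeff m S = aaS2 N l m := by
    intro m; rw [hS]; exact PowerSeries.coeff_mk _ _
  -- scalar identities
  have e1 : ∀ n : ℕ, ccS2 N (n + 2) = ((N : ℝ) + n + 2) * ccS2 N (n + 1) := by
    intro n
    have := ccS2_succ N (n + 1)
    push_cast at this ⊢
    linarith [this]
  have e2 : ∀ n : ℕ, (1 - ((N : ℝ) + n + 1) * l) * ccS2 N (n + 1)
      = (((N : ℝ) + n + 1) * (1 - ((N : ℝ) + n + 1) * l)) * ccS2 N n := by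
    intro n
    rw [ccS2_succ N n]
    ring
  have e3 : ∀ n : ℕ, ccS2 N (n + 2) * aaS2 N l (n + 2)
      = (1 - ((N : ℝ) + n + 1) * l) * (ccS2 N (n + 1) * aaS2 N l (n + 1)) := by
    intro n
    rw [ccS2_mul_aaS2, ccS2_mul_aaS2]
    rw [show n + 2 = (n + 1) + 1 from rfl, Finset.prod_range_succ]
    push_cast
    ring
  constructor
  · intro n
    have E1 : PowerSeries.C (ccS2 N (n + 2))
        = PowerSeries.C ((N : ℝ) + n + 2) * PowerSeries.C (ccS2 N (n + 1)) := by
      rw [← map_mul, e1 n]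
    have E2 : PowerSeries.C (1 - ((N : ℝ) + n + 1) * l) * PowerSeries.C (ccS2 N (n + 1))
        = PowerSeries.C (((N : ℝ) + n + 1) * (1 - ((N : ℝ) + n + 1) * l)) *
            PowerSeries.C (ccS2 N n) := by
      rw [← map_mul, ← map_mul, e2 n]
    have E3 : PowerSeries.C (ccS2 N (n + 2)) * PowerSeries.C (aaS2 N l (n + 2))
        = PowerSeries.C (1 - ((N : ℝ) + n + 1) * l) *
            (PowerSeries.C (ccS2 N (n + 1)) * PowerSeries.C (aaS2 N l (n + 1))) := by
      rw [← map_mul, ← map_mul, ← map_mul, e3 n]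
    constructor
    · rw [hP' (n + 2), hP' (n + 1), hP' n]
      linear_combination E1 - PowerSeries.X * E2
    · rw [hQ' (n + 2), hQ' (n + 1), hQ' n,
        show ttS2 N l (n + 2) = ttS2 N l (n + 1)
            + PowerSeries.C (aaS2 N l (n + 2)) * PowerSeries.X ^ (n + 2) from ttS2_succ N l (n + 1),
        ttS2_succ N l n]
      linear_combination
        (ttS2 N l n + PowerSeries.C (aaS2 N l (n + 1)) * PowerSeries.X ^ (n + 1)) * E1
          + PowerSeries.X ^ (n + 2) * E3
          - PowerSeries.X * ttS2 N l n * E2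
  · intro n k hk
    have hS0 : PowerSeries.constantCoeff S ≠ 0 := by
      have : PowerSeries.constantCoeff S = aaS2 N l 0 := by
        rw [← PowerSeries.coeff_zero_eq_constantCoeff_apply, hSc 0]
      rw [this]
      unfold aaS2
      simp [Nat.factorial_ne_zero]
    have hSf : S * f = 1 := by
      rw [hf]; exact PowerSeries.mul_inv_cancel _ hS0
    have hQc : ∀ j ≤ n, PowerSeries.coeff j (Q n) = ccS2 N n * PowerSeries.coeff j S := by
      intro j hj
      rw [hQ' n, PowerSeries.coeff_C_mul, coeff_ttS2 N l n j hj, hSc j]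
    calc PowerSeries.coeff k (Q n * f)
        = ∑ p ∈ Finset.HasAntidiagonal.antidiagonal k,
            PowerSeries.coeff p.1 (Q n) * PowerSeries.coeff p.2 f :=
          PowerSeries.coeff_mul _ _ _
      _ = ccS2 N n * ∑ p ∈ Finset.HasAntidiagonal.antidiagonal k,
            PowerSeries.coeff p.1 S * PowerSeries.coeff p.2 f := by
          rw [Finset.mul_sum]
          refine Finset.sum_congr rfl ?_
          intro p hp
          have hp1 : p.1 ≤ n := by
            have := Finset.HasAntidiagonal.mem_antidiagonal.mp hp
            omega
          rw [hQc p.1 hp1]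
          ring
      _ = ccS2 N n * PowerSeries.coeff k (S * f) := by
          rw [PowerSeries.coeff_mul]
      _ = PowerSeries.coeff k (P n) := by
          rw [hSf, hP' n]
          by_cases hk0 : k = 0 <;>
            simp [hk0, PowerSeries.coeff_one, PowerSeries.coeff_C]
end

section
/- Fix an integer N ≥ 1. In ℝ[[X]] let f = (∑_{n=0}^{∞} (N!/(N+n)!) X^n)^{-1} (the generating function ∑_{n≥0} B_{N,n} X^n/n! of the hypergeometric Bernoulli numbers). Define P_n(X) = (N+n)!/N! and Q_n(X) = ((N+n)!/N!) · ∑_{j=0}^{n} (N!/(N+j)!) X^j. Then: (i) for all n ≥ 2, P_n(X) = (N+n+X) P_{n-1}(X) − (N+n−1) X P_{n-2}(X), and the same recurrence holds for Q_n; (ii) for all n ≥ 0, Q_n(X) · f ≡ P_n(X) (mod X^{n+1}). -/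
open Finset PowerSeries

/-- Continued fraction convergents for the generating function of the
hypergeometric Bernoulli numbers `B_{N,n}`, i.e. `f = (∑_n (N!/(N+n)!) X^n)⁻¹`.
With `P n = (N+n)!/N!` and `Q n = ((N+n)!/N!) · ∑_{j=0}^n (N!/(N+j)!) X^j`:
(i) for all `n ≥ 2` (written at index `n+2`) both satisfy
`P_n = (N+n+X) P_{n-1} - (N+n-1) X P_{n-2}`;
(ii) for all `n ≥ 0`, `Q n · f ≡ P n (mod X^{n+1})`. -/
theorem statement3 (N : ℕ) (hN : 1 ≤ N)
    (f : PowerSeries ℝ)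
    (hf : f = (PowerSeries.mk fun n => ((N.factorial : ℝ) / ((N + n).factorial : ℝ)))⁻¹)
    (P Q : ℕ → PowerSeries ℝ)
    (hP : ∀ n, P n = PowerSeries.C (((N + n).factorial : ℝ) / (N.factorial : ℝ)))
    (hQ : ∀ n, Q n = PowerSeries.C (((N + n).factorial : ℝ) / (N.factorial : ℝ)) *
      ∑ j ∈ Finset.range (n + 1),
        PowerSeries.C ((N.factorial : ℝ) / ((N + j).factorial : ℝ)) * PowerSeries.X ^ j) :
    (∀ n : ℕ,
      P (n + 2) = (PowerSeries.C ((N : ℝ) + n + 2) + PowerSeries.X) * P (n + 1)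
          - PowerSeries.C ((N : ℝ) + n + 1) * PowerSeries.X * P n ∧
      Q (n + 2) = (PowerSeries.C ((N : ℝ) + n + 2) + PowerSeries.X) * Q (n + 1)
          - PowerSeries.C ((N : ℝ) + n + 1) * PowerSeries.X * Q n) ∧
    (∀ n : ℕ, ∀ k ≤ n,
      PowerSeries.coeff k (Q n * f) = PowerSeries.coeff k (P n)) := by
  have hNf : (N.factorial : ℝ) ≠ 0 := Nat.cast_ne_zero.mpr (Nat.factorial_ne_zero N)
  have hfac : ∀ m : ℕ, ((N + m).factorial : ℝ) ≠ 0 :=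
    fun m => Nat.cast_ne_zero.mpr (Nat.factorial_ne_zero _)
  constructor
  · intro n
    -- key real-number identities
    have E1 : PowerSeries.C (((N + (n + 2)).factorial : ℝ) / (N.factorial : ℝ)) =
        PowerSeries.C ((N : ℝ) + n + 2) *
          PowerSeries.C (((N + (n + 1)).factorial : ℝ) / (N.factorial : ℝ)) := by
      rw [← map_mul]; congr 1
      rw [show N + (n + 2) = (N + (n + 1)) + 1 by ring, Nat.factorial_succ]
      push_cast; ring
    have E0 : PowerSeries.C (((N + (n + 1)).factorial : ℝ) / (N.factorial : ℝ)) =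
        PowerSeries.C ((N : ℝ) + n + 1) *
          PowerSeries.C (((N + n).factorial : ℝ) / (N.factorial : ℝ)) := by
      rw [← map_mul]; congr 1
      rw [show N + (n + 1) = (N + n) + 1 by ring, Nat.factorial_succ]
      push_cast; ring
    have F1 : PowerSeries.C (((N + (n + 1)).factorial : ℝ) / (N.factorial : ℝ)) *
        PowerSeries.C ((N.factorial : ℝ) / ((N + (n + 1)).factorial : ℝ)) = 1 := by
      rw [← map_mul, ← map_one (PowerSeries.C (R := ℝ))]; congr 1
      field_simp
    have F2 : PowerSeries.C (((N + (n + 2)).factorial : ℝ) / (N.factorial : ℝ)) *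
        PowerSeries.C ((N.factorial : ℝ) / ((N + (n + 2)).factorial : ℝ)) = 1 := by
      rw [← map_mul, ← map_one (PowerSeries.C (R := ℝ))]; congr 1
      field_simp
    constructor
    · rw [hP, hP, hP, E1, E0]; ring
    · rw [hQ, hQ, hQ]
      rw [show n + 2 + 1 = (n + 1) + 1 + 1 from rfl]
      rw [Finset.sum_range_succ (n := (n + 1) + 1), Finset.sum_range_succ (n := n + 1)]
      set S := ∑ j ∈ Finset.range (n + 1),
        PowerSeries.C ((N.factorial : ℝ) / ((N + j).factorial : ℝ)) * PowerSeries.X ^ j with hS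
      linear_combination (S + PowerSeries.C ((N.factorial : ℝ) / ((N + (n + 1)).factorial : ℝ))
          * PowerSeries.X ^ (n + 1)) * E1
        - PowerSeries.X * S * E0
        + PowerSeries.X ^ (n + 2) * F2 - PowerSeries.X ^ (n + 2) * F1
  · intro n k hk
    rw [hf, hQ, hP, mul_assoc, PowerSeries.coeff_C_mul]
    set g := PowerSeries.mk fun m => ((N.factorial : ℝ) / ((N + m).factorial : ℝ)) with hg
    have hg0 : constantCoeff g ≠ 0 := by
      rw [hg, PowerSeries.constantCoeff_mk]
      simp
      exact N.factorial_ne_zero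
    have hgg : g * g⁻¹ = 1 := PowerSeries.mul_inv_cancel g hg0
    have key : PowerSeries.coeff k ((∑ j ∈ Finset.range (n + 1),
        PowerSeries.C ((N.factorial : ℝ) / ((N + j).factorial : ℝ)) * PowerSeries.X ^ j) * g⁻¹)
        = PowerSeries.coeff k (g * g⁻¹) := by
      rw [PowerSeries.coeff_mul, PowerSeries.coeff_mul]
      apply Finset.sum_congr rfl
      intro p hp
      congr 1
      have hp1 : p.1 ≤ n := le_trans (Finset.HasAntidiagonal.antidiagonal.fst_le hp) hk
      rw [map_sum]
      simp only [PowerSeries.coeff_C_mul, PowerSeries.coeff_X_pow, mul_ite, mul_one, mul_zero]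
      rw [Finset.sum_ite_eq (Finset.range (n + 1)) p.1]
      simp [hg, Finset.mem_range, Nat.lt_succ_of_le hp1, PowerSeries.coeff_mk]
    rw [key, hgg]
    simp [PowerSeries.coeff_one, PowerSeries.coeff_C]
end

section
/- Let B_k denote the Bernoulli numbers, defined by ∑_{k≥0} B_k X^k/k! = X/(e^X − 1) in ℚ[[X]]. Define P_n = (n+1)! and Q_n(X) = (n+1)! · ∑_{j=0}^{n} X^j/(j+1)!. Then: (i) for all n ≥ 2, Q_n(X) = (n+1+X) Q_{n-1}(X) − n X Q_{n-2}(X), with Q_0 = 1 and Q_1(X) = 2 + X; (ii) for all n ≥ 0, Q_n(X) · (∑_{k≥0} B_k X^k/k!) ≡ (n+1)! (mod X^{n+1}). -/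
open Finset PowerSeries

/-- Let `B_k` be the Bernoulli numbers, defined by
`(∑_k B_k X^k/k!) · (e^X - 1) = X` in `ℚ⟦X⟧`.  With `P n = (n+1)!` and
`Q n = (n+1)! · ∑_{j=0}^n X^j/(j+1)!`:
(i) for all `n ≥ 2` (written at index `n+2`), `Q_n = (n+1+X) Q_{n-1} - n X Q_{n-2}`,
with `Q_0 = 1`, `Q_1 = 2 + X`;
(ii) for all `n ≥ 0`, `Q n · (∑_k B_k X^k/k!) ≡ (n+1)! (mod X^{n+1})`. -/
theorem statement4 (B : ℕ → ℚ)
    (hB : (PowerSeries.mk fun k => B k / (k.factorial : ℚ)) * (PowerSeries.exp ℚ - 1) =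
      PowerSeries.X)
    (Q : ℕ → PowerSeries ℚ)
    (hQ : ∀ n, Q n = PowerSeries.C (R := ℚ) (((n + 1).factorial : ℚ)) *
      ∑ j ∈ Finset.range (n + 1),
        PowerSeries.C (R := ℚ) (1 / ((j + 1).factorial : ℚ)) * PowerSeries.X ^ j) :
    (∀ n : ℕ,
      Q (n + 2) = (PowerSeries.C (R := ℚ) ((n : ℚ) + 3) + PowerSeries.X) * Q (n + 1)
          - PowerSeries.C (R := ℚ) ((n : ℚ) + 2) * PowerSeries.X * Q n) ∧
    Q 0 = 1 ∧ Q 1 = PowerSeries.C (R := ℚ) 2 + PowerSeries.X ∧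
    (∀ n : ℕ, ∀ k ≤ n,
      PowerSeries.coeff (R := ℚ) k (Q n * PowerSeries.mk fun j => B j / (j.factorial : ℚ)) =
        PowerSeries.coeff (R := ℚ) k (PowerSeries.C (R := ℚ) (((n + 1).factorial : ℚ)))) := by
  have hfac2 : ∀ m : ℕ, ((m + 2).factorial : ℚ) = ((m : ℚ) + 2) * ((m + 1).factorial : ℚ) := by
    intro m
    rw [Nat.factorial_succ, Nat.cast_mul]
    push_cast
    ring
  have hfacne : ∀ m : ℕ, ((m.factorial : ℚ)) ≠ 0 := fun m =>
    Nat.cast_ne_zero.mpr (Nat.factorial_ne_zero m)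
  refine ⟨?_, ?_, ?_, ?_⟩
  · intro n
    rw [hQ, hQ, hQ]
    rw [show n + 2 + 1 = (n + 1 + 1) + 1 by ring, Finset.sum_range_succ,
      Finset.sum_range_succ (n := n + 1)]
    set S := ∑ j ∈ Finset.range (n + 1),
        PowerSeries.C (R := ℚ) (1 / ((j + 1).factorial : ℚ)) * PowerSeries.X ^ j with hS
    have e1 : (((n + 1 + 1 + 1).factorial : ℚ)) = ((n : ℚ) + 3) * ((n + 2).factorial : ℚ) := by
      rw [show n + 1 + 1 + 1 = (n + 2) + 1 by ring, Nat.factorial_succ, Nat.cast_mul]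
      push_cast
      ring
    have h1 : PowerSeries.C (R := ℚ) ((n : ℚ) + 3) * PowerSeries.C (R := ℚ) (((n + 2).factorial : ℚ)) *
        PowerSeries.C (R := ℚ) (1 / (((n + 1 + 1 + 1).factorial : ℚ))) = 1 := by
      rw [← map_mul, ← map_mul, ← map_one (PowerSeries.C (R := ℚ))]
      congr 1
      rw [e1]
      have h2 : ((n : ℚ) + 3) ≠ 0 := by positivity
      field_simp
    have h2 : PowerSeries.C (R := ℚ) (((n + 2).factorial : ℚ)) *
        PowerSeries.C (R := ℚ) (1 / (((n + 1 + 1).factorial : ℚ))) = 1 := by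
      rw [← map_mul, ← map_one (PowerSeries.C (R := ℚ))]
      congr 1
      rw [show n + 1 + 1 = n + 2 by ring]
      field_simp
    have h3 : PowerSeries.C (R := ℚ) ((n : ℚ) + 2) * PowerSeries.C (R := ℚ) (((n + 1).factorial : ℚ)) =
        PowerSeries.C (R := ℚ) (((n + 2).factorial : ℚ)) := by
      rw [← map_mul]
      congr 1
      rw [hfac2]
    have h4 : PowerSeries.C (R := ℚ) (((n + 2 + 1).factorial : ℚ)) =
        PowerSeries.C (R := ℚ) ((n : ℚ) + 3) * PowerSeries.C (R := ℚ) (((n + 2).factorial : ℚ)) := by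
      rw [← map_mul]
      congr 1
    have h5 : PowerSeries.C (R := ℚ) (((n + 1 + 1).factorial : ℚ)) =
        PowerSeries.C (R := ℚ) (((n + 2).factorial : ℚ)) := by norm_num
    rw [h4, h5]
    linear_combination (PowerSeries.X : ℚ⟦X⟧) ^ (n + 2) * h1 -
      (PowerSeries.X : ℚ⟦X⟧) ^ (n + 2) * h2 + PowerSeries.X * S * h3
  · rw [hQ]; simp
  · rw [hQ, Finset.sum_range_succ]
    have h1 : (PowerSeries.C (R := ℚ)) 2 * (PowerSeries.C (R := ℚ)) (1 / 2 : ℚ) = 1 := by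
      rw [← map_mul]; norm_num
    rw [Finset.sum_range_one]
    norm_num [Nat.factorial]
    linear_combination PowerSeries.X * h1
  · intro n k hk
    set F := PowerSeries.mk fun j => B j / (j.factorial : ℚ) with hF
    set S := ∑ j ∈ Finset.range (n + 1),
        PowerSeries.C (R := ℚ) (1 / ((j + 1).factorial : ℚ)) * PowerSeries.X ^ j with hS
    set R := (PowerSeries.exp ℚ - 1) - PowerSeries.X * S with hRdef
    have hScoeff : ∀ i, PowerSeries.coeff (R := ℚ) i S =
        if i < n + 1 then 1 / ((i + 1).factorial : ℚ) else 0 := by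
      intro i
      rw [hS, map_sum]
      simp only [PowerSeries.coeff_C_mul, PowerSeries.coeff_X_pow, mul_ite, mul_one, mul_zero]
      rw [Finset.sum_ite_eq (Finset.range (n + 1)) i
        (fun j => 1 / ((j + 1).factorial : ℚ))]
      simp
    have hRcoeff : ∀ i ≤ n + 1, PowerSeries.coeff (R := ℚ) i R = 0 := by
      intro i hi
      rw [hRdef]
      simp only [map_sub]
      rcases i with _ | m
      · simp [PowerSeries.coeff_zero_eq_constantCoeff, map_mul]
      · rw [PowerSeries.coeff_succ_X_mul, hScoeff]
        have hm : m < n + 1 := by omega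
        simp [hm, PowerSeries.coeff_exp, PowerSeries.coeff_one]
    have h6 : (PowerSeries.exp ℚ - 1) - R = PowerSeries.X * S := sub_sub_cancel _ _
    have hmain : PowerSeries.X * (Q n * F) =
        PowerSeries.C (R := ℚ) (((n + 1).factorial : ℚ)) * (PowerSeries.X - R * F) := by
      have step : PowerSeries.X * (Q n * F) =
          PowerSeries.C (R := ℚ) (((n + 1).factorial : ℚ)) *
            (F * (PowerSeries.exp ℚ - 1) - R * F) := by
        rw [hQ n, ← hS]
        linear_combination (PowerSeries.C (R := ℚ) (((n + 1).factorial : ℚ)) * F) * h6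
      rw [step, hB]
    have hcoeff : PowerSeries.coeff (R := ℚ) (k + 1) (R * F) = 0 := by
      rw [PowerSeries.coeff_mul]
      apply Finset.sum_eq_zero
      intro p hp
      rw [Finset.HasAntidiagonal.mem_antidiagonal] at hp
      have : p.1 ≤ n + 1 := by omega
      rw [hRcoeff p.1 this, zero_mul]
    have := congrArg (PowerSeries.coeff (R := ℚ) (k + 1)) hmain
    rw [PowerSeries.coeff_succ_X_mul] at this
    rw [this]
    simp only [map_mul, map_sub, PowerSeries.coeff_C_mul, hcoeff, sub_zero,
      PowerSeries.coeff_X, PowerSeries.coeff_C]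
    rcases Nat.eq_zero_or_pos k with hk0 | hk0
    · subst hk0; simp
    · rw [if_neg (by omega), if_neg (by omega), mul_zero]
end

section
/- Fix an integer N ≥ 1 and λ ∈ ℝ. In ℝ[[X]] let T_{N,λ} = ∑_{n=0}^{∞} (∏_{j=0}^{n-1} (λ − N − j)) · (N!/(N+n)!) · X^n and let f = T_{N,λ}^{-1} (the generating function ∑_{n≥0} γ_{N,n}(λ) X^n/n! of the hypergeometric degenerate Cauchy numbers). Define P_n(X) = (N+n)!/N! and Q_n(X) = ((N+n)!/N!) · ∑_{i=0}^{n} (∏_{j=0}^{i-1} (λ − N − j)) · (N!/(N+i)!) · X^i. Then: (i) for all n ≥ 2, P_n(X) = (N+n + (λ−N−n+1)X) P_{n-1}(X) − (N+n−1)(λ−N−n+1) X P_{n-2}(X), and the same recurrence holds for Q_n; (ii) for all n ≥ 0, Q_n(X) · f ≡ P_n(X) (mod X^{n+1}). -/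
open Finset PowerSeries

/-- Continued fraction convergents for the generating function of the
hypergeometric degenerate Cauchy numbers `γ_{N,n}(λ)`.  With
`T = ∑_n (∏_{j=0}^{n-1}(λ-N-j)) · (N!/(N+n)!) · X^n`, `f = T⁻¹`,
`P n = (N+n)!/N!` and `Q n = ((N+n)!/N!) · ∑_{i=0}^n (∏_{j<i}(λ-N-j)) (N!/(N+i)!) X^i`:
(i) for all `n ≥ 2` (written at index `n+2`) both satisfy
`P_n = (N+n + (λ-N-n+1)X) P_{n-1} - (N+n-1)(λ-N-n+1) X P_{n-2}`;
(ii) for all `n ≥ 0`, `Q n · f ≡ P n (mod X^{n+1})`. -/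
theorem statement6 (N : ℕ) (hN : 1 ≤ N) (l : ℝ)
    (T f : PowerSeries ℝ)
    (hT : T = PowerSeries.mk fun n =>
      (∏ j ∈ Finset.range n, (l - (N : ℝ) - j)) *
        ((N.factorial : ℝ) / ((N + n).factorial : ℝ)))
    (hf : f = T⁻¹)
    (P Q : ℕ → PowerSeries ℝ)
    (hP : ∀ n, P n = PowerSeries.C (((N + n).factorial : ℝ) / (N.factorial : ℝ)))
    (hQ : ∀ n, Q n = PowerSeries.C (((N + n).factorial : ℝ) / (N.factorial : ℝ)) *
      ∑ i ∈ Finset.range (n + 1),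
        PowerSeries.C ((∏ j ∈ Finset.range i, (l - (N : ℝ) - j)) *
          ((N.factorial : ℝ) / ((N + i).factorial : ℝ))) * PowerSeries.X ^ i) :
    (∀ n : ℕ,
      P (n + 2) = (PowerSeries.C ((N : ℝ) + n + 2) +
            PowerSeries.C (l - (N : ℝ) - n - 1) * PowerSeries.X) * P (n + 1)
          - PowerSeries.C (((N : ℝ) + n + 1) * (l - (N : ℝ) - n - 1)) *
              PowerSeries.X * P n ∧
      Q (n + 2) = (PowerSeries.C ((N : ℝ) + n + 2) +
            PowerSeries.C (l - (N : ℝ) - n - 1) * PowerSeries.X) * Q (n + 1)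
          - PowerSeries.C (((N : ℝ) + n + 1) * (l - (N : ℝ) - n - 1)) *
              PowerSeries.X * Q n) ∧
    (∀ n : ℕ, ∀ k ≤ n,
      PowerSeries.coeff k (Q n * f) = PowerSeries.coeff k (P n)) := by
  -- abbreviations (real-number facts)
  have hfacne : ∀ m : ℕ, ((m.factorial : ℝ)) ≠ 0 := fun m => by
    exact_mod_cast m.factorial_ne_zero
  have hfac : ∀ m : ℕ, (((N + (m+1)).factorial : ℝ) / N.factorial)
      = ((N:ℝ) + m + 1) * (((N + m).factorial : ℝ) / N.factorial) := by
    intro m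
    rw [show N + (m+1) = (N + m) + 1 from rfl, Nat.factorial_succ]
    push_cast
    ring
  have hc1 : ∀ n : ℕ, (C (((N + (n+1)).factorial : ℝ) / N.factorial))
      = C ((N:ℝ)+n+1) * C (((N + n).factorial : ℝ) / N.factorial) := by
    intro n
    rw [← map_mul]
    exact congrArg _ (hfac n)
  have hc2 : ∀ n : ℕ, (C (((N + (n+2)).factorial : ℝ) / N.factorial))
      = C ((N:ℝ)+n+2) * (C ((N:ℝ)+n+1) * C (((N + n).factorial : ℝ) / N.factorial)) := by
    intro n
    rw [← map_mul, ← map_mul]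
    refine congrArg _ ?_
    rw [show n + 2 = (n+1)+1 from rfl, hfac (n+1), hfac n]
    push_cast
    ring
  refine ⟨fun n => ⟨?_, ?_⟩, ?_⟩
  · -- P recurrence
    rw [hP, hP, hP, map_mul]
    linear_combination hc2 n - (C ((N:ℝ)+n+2) + C (l-(N:ℝ)-n-1) * X) * hc1 n
  · -- Q recurrence
    rw [hQ, hQ, hQ, map_mul]
    have e2 : (∑ i ∈ Finset.range (n+2+1),
        PowerSeries.C ((∏ j ∈ Finset.range i, (l - (N : ℝ) - j)) *
          ((N.factorial : ℝ) / ((N + i).factorial : ℝ))) * PowerSeries.X ^ i)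
        = (∑ i ∈ Finset.range (n+1),
        PowerSeries.C ((∏ j ∈ Finset.range i, (l - (N : ℝ) - j)) *
          ((N.factorial : ℝ) / ((N + i).factorial : ℝ))) * PowerSeries.X ^ i)
        + PowerSeries.C ((∏ j ∈ Finset.range (n+1), (l - (N : ℝ) - j)) *
          ((N.factorial : ℝ) / ((N + (n+1)).factorial : ℝ))) * PowerSeries.X ^ (n+1)
        + PowerSeries.C ((∏ j ∈ Finset.range (n+2), (l - (N : ℝ) - j)) *
          ((N.factorial : ℝ) / ((N + (n+2)).factorial : ℝ))) * PowerSeries.X ^ (n+2) := by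
      rw [Finset.sum_range_succ, Finset.sum_range_succ]
    have e1 : (∑ i ∈ Finset.range (n+1+1),
        PowerSeries.C ((∏ j ∈ Finset.range i, (l - (N : ℝ) - j)) *
          ((N.factorial : ℝ) / ((N + i).factorial : ℝ))) * PowerSeries.X ^ i)
        = (∑ i ∈ Finset.range (n+1),
        PowerSeries.C ((∏ j ∈ Finset.range i, (l - (N : ℝ) - j)) *
          ((N.factorial : ℝ) / ((N + i).factorial : ℝ))) * PowerSeries.X ^ i)
        + PowerSeries.C ((∏ j ∈ Finset.range (n+1), (l - (N : ℝ) - j)) *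
          ((N.factorial : ℝ) / ((N + (n+1)).factorial : ℝ))) * PowerSeries.X ^ (n+1) := by
      rw [Finset.sum_range_succ]
    rw [e2, e1]
    have h3 : C ((N:ℝ)+n+2) * C ((∏ j ∈ Finset.range (n+2), (l - (N : ℝ) - j)) *
          ((N.factorial : ℝ) / ((N + (n+2)).factorial : ℝ)))
        = C (l-(N:ℝ)-n-1) * C ((∏ j ∈ Finset.range (n+1), (l - (N : ℝ) - j)) *
          ((N.factorial : ℝ) / ((N + (n+1)).factorial : ℝ))) := by
      rw [← map_mul, ← map_mul]
      refine congrArg _ ?_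
      rw [Finset.prod_range_succ,
        show N + (n+2) = (N + (n+1)) + 1 from rfl, Nat.factorial_succ]
      have hne : ((N + (n+1)).factorial : ℝ) ≠ 0 := hfacne _
      push_cast
      field_simp
      ring
    linear_combination
        ((∑ i ∈ Finset.range (n+1),
        PowerSeries.C ((∏ j ∈ Finset.range i, (l - (N : ℝ) - j)) *
          ((N.factorial : ℝ) / ((N + i).factorial : ℝ))) * PowerSeries.X ^ i)
        + PowerSeries.C ((∏ j ∈ Finset.range (n+1), (l - (N : ℝ) - j)) *
          ((N.factorial : ℝ) / ((N + (n+1)).factorial : ℝ))) * PowerSeries.X ^ (n+1)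
        + PowerSeries.C ((∏ j ∈ Finset.range (n+2), (l - (N : ℝ) - j)) *
          ((N.factorial : ℝ) / ((N + (n+2)).factorial : ℝ))) * PowerSeries.X ^ (n+2)) * hc2 n
      - ((C ((N:ℝ)+n+2) + C (l-(N:ℝ)-n-1) * X) *
        ((∑ i ∈ Finset.range (n+1),
        PowerSeries.C ((∏ j ∈ Finset.range i, (l - (N : ℝ) - j)) *
          ((N.factorial : ℝ) / ((N + i).factorial : ℝ))) * PowerSeries.X ^ i)
        + PowerSeries.C ((∏ j ∈ Finset.range (n+1), (l - (N : ℝ) - j)) *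
          ((N.factorial : ℝ) / ((N + (n+1)).factorial : ℝ))) * PowerSeries.X ^ (n+1))) * hc1 n
      + (C ((N:ℝ)+n+1) * C (((N + n).factorial : ℝ) / N.factorial) * X^(n+2)) * h3
  · -- part (ii)
    intro n k hk
    have hT0 : PowerSeries.constantCoeff T = 1 := by
      rw [hT]
      simp [div_self (hfacne N)]
    have hTf : T * f = 1 := by
      rw [hf]
      exact PowerSeries.mul_inv_cancel _ (by rw [hT0]; exact one_ne_zero)
    rw [hQ, hP, mul_assoc, PowerSeries.coeff_C_mul]
    have hS : ∀ i : ℕ, i ≤ n → PowerSeries.coeff i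
        (∑ m ∈ Finset.range (n+1),
          PowerSeries.C ((∏ j ∈ Finset.range m, (l - (N : ℝ) - j)) *
            ((N.factorial : ℝ) / ((N + m).factorial : ℝ))) * PowerSeries.X ^ m)
        = PowerSeries.coeff i T := by
      intro i hi
      rw [hT, PowerSeries.coeff_mk, map_sum]
      simp only [PowerSeries.coeff_C_mul, PowerSeries.coeff_X_pow, mul_ite, mul_one, mul_zero]
      rw [Finset.sum_ite_eq (Finset.range (n+1)) i]
      simp [Nat.lt_succ_iff.mpr hi]
    have key : PowerSeries.coeff k
        ((∑ m ∈ Finset.range (n+1),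
          PowerSeries.C ((∏ j ∈ Finset.range m, (l - (N : ℝ) - j)) *
            ((N.factorial : ℝ) / ((N + m).factorial : ℝ))) * PowerSeries.X ^ m) * f)
        = PowerSeries.coeff k (T * f) := by
      rw [PowerSeries.coeff_mul, PowerSeries.coeff_mul]
      refine Finset.sum_congr rfl fun p hp => ?_
      have hp1 : p.1 ≤ n := by
        have := Finset.HasAntidiagonal.mem_antidiagonal.mp hp
        omega
      rw [hS p.1 hp1]
    rw [key, hTf, PowerSeries.coeff_one, PowerSeries.coeff_C]
    split_ifs <;> simp
end

section
/- Fix an integer N ≥ 1. In ℚ[[X]] let f_N = (∑_{n=0}^{∞} (−1)^n (N/(N+n)) X^n)^{-1} (the generating function ∑_{n≥0} c_{N,n} X^n/n! of the hypergeometric Cauchy numbers). Define P_n(X) = (N+n)!/N! and Q_n(X) = ((N+n)!/N!) · ∑_{i=0}^{n} (−1)^i (N/(N+i)) X^i. Then: (i) for all n ≥ 2, P_n(X) = (N+n − (N+n−1)X) P_{n-1}(X) + (N+n−1)^2 X P_{n-2}(X), and the same recurrence holds for Q_n; (ii) for all n ≥ 0, Q_n(X) · f_N ≡ P_n(X) (mod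 X^{n+1}). -/
open Finset PowerSeries

/-- Continued fraction convergents for the generating function of the
hypergeometric Cauchy numbers `c_{N,n}`, i.e. `f_N = (∑_n (-1)^n (N/(N+n)) X^n)⁻¹` in `ℚ⟦X⟧`.
With `P n = (N+n)!/N!` and `Q n = ((N+n)!/N!) · ∑_{i=0}^n (-1)^i (N/(N+i)) X^i`:
(i) for all `n ≥ 2` (written at index `n+2`) both satisfy
`P_n = (N+n - (N+n-1)X) P_{n-1} + (N+n-1)^2 X P_{n-2}`;
(ii) for all `n ≥ 0`, `Q n · f_N ≡ P n (mod X^{n+1})`. -/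
theorem statement7 (N : ℕ) (hN : 1 ≤ N)
    (f : PowerSeries ℚ)
    (hf : f = (PowerSeries.mk fun n => (-1) ^ n * ((N : ℚ) / ((N : ℚ) + n)))⁻¹)
    (P Q : ℕ → PowerSeries ℚ)
    (hP : ∀ n, P n = PowerSeries.C (((N + n).factorial : ℚ) / (N.factorial : ℚ)))
    (hQ : ∀ n, Q n = PowerSeries.C (((N + n).factorial : ℚ) / (N.factorial : ℚ)) *
      ∑ i ∈ Finset.range (n + 1),
        PowerSeries.C ((-1) ^ i * ((N : ℚ) / ((N : ℚ) + i))) * PowerSeries.X ^ i) :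
    (∀ n : ℕ,
      P (n + 2) = (PowerSeries.C ((N : ℚ) + n + 2) -
            PowerSeries.C ((N : ℚ) + n + 1) * PowerSeries.X) * P (n + 1)
          + PowerSeries.C (((N : ℚ) + n + 1) ^ 2) * PowerSeries.X * P n ∧
      Q (n + 2) = (PowerSeries.C ((N : ℚ) + n + 2) -
            PowerSeries.C ((N : ℚ) + n + 1) * PowerSeries.X) * Q (n + 1)
          + PowerSeries.C (((N : ℚ) + n + 1) ^ 2) * PowerSeries.X * Q n) ∧
    (∀ n : ℕ, ∀ k ≤ n,
      PowerSeries.coeff k (Q n * f) = PowerSeries.coeff k (P n)) := by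
  have hN0 : (N : ℚ) ≠ 0 := by
    have : (0:ℚ) < N := by exact_mod_cast Nat.lt_of_lt_of_le Nat.zero_lt_one hN
    linarith
  have hNf0 : (N.factorial : ℚ) ≠ 0 := by
    exact_mod_cast N.factorial_ne_zero
  have hfac : ∀ m : ℕ, (((N + (m+1)).factorial : ℚ) / N.factorial)
      = ((N : ℚ) + m + 1) * (((N + m).factorial : ℚ) / N.factorial) := by
    intro m
    have h : N + (m+1) = (N + m) + 1 := by ring
    rw [h, Nat.factorial_succ]
    push_cast
    field_simp
  constructor
  · intro n
    have hc0 : (((N + (n+1)).factorial : ℚ) / N.factorial)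
        = ((N : ℚ) + n + 1) * (((N + n).factorial : ℚ) / N.factorial) := hfac n
    have hc1 : (((N + (n+2)).factorial : ℚ) / N.factorial)
        = ((N : ℚ) + n + 2) * (((N : ℚ) + n + 1) * (((N + n).factorial : ℚ) / N.factorial)) := by
      rw [show N + (n+2) = N + ((n+1)+1) from by ring, hfac, hfac]
      push_cast
      ring
    constructor
    · rw [hP, hP, hP, hc1, hc0]
      simp only [map_mul, map_pow]
      ring
    · rw [hQ, hQ, hQ, hc1, hc0]
      rw [Finset.sum_range_succ (n := n+2), Finset.sum_range_succ (n := n+1)]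
      have ha : PowerSeries.C ((N:ℚ) + n + 2) *
          PowerSeries.C ((-1) ^ (n+2) * ((N : ℚ) / ((N : ℚ) + ((n:ℕ)+2 : ℕ)))) =
          - (PowerSeries.C ((N:ℚ) + n + 1) *
          PowerSeries.C ((-1) ^ (n+1) * ((N : ℚ) / ((N : ℚ) + ((n:ℕ)+1 : ℕ))))) := by
        rw [← map_mul, ← map_mul, ← map_neg]
        congr 1
        have h2 : (N:ℚ) + (((n:ℕ)+2 : ℕ) : ℚ) ≠ 0 := by positivity
        have h1 : (N:ℚ) + (((n:ℕ)+1 : ℕ) : ℚ) ≠ 0 := by positivity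
        field_simp
        push_cast
        ring
      simp only [map_mul, map_pow] at ha ⊢
      linear_combination (PowerSeries.C ((N:ℚ) + n + 1) *
        PowerSeries.C (((N + n).factorial : ℚ) / N.factorial) *
        PowerSeries.X ^ (n+2)) * ha
  · intro n k hk
    set g : PowerSeries ℚ := PowerSeries.mk fun m => (-1) ^ m * ((N : ℚ) / ((N : ℚ) + m)) with hg
    have hgc : PowerSeries.constantCoeff g ≠ 0 := by
      have h1 : PowerSeries.constantCoeff g = 1 := by
        rw [hg]
        simp [hN0]
      rw [h1]; norm_num
    have hgf : g * f = 1 := by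
      rw [hf]; exact PowerSeries.mul_inv_cancel _ hgc
    rw [hQ, hP]
    set S : PowerSeries ℚ := ∑ i ∈ Finset.range (n + 1),
        PowerSeries.C ((-1) ^ i * ((N : ℚ) / ((N : ℚ) + i))) * PowerSeries.X ^ i with hS
    have hdiff : ∀ j ≤ n, PowerSeries.coeff j (S - g) = 0 := by
      intro j hj
      rw [map_sub]
      have hSj : PowerSeries.coeff j S = (-1) ^ j * ((N : ℚ) / ((N : ℚ) + j)) := by
        rw [hS, map_sum]
        rw [Finset.sum_eq_single j]
        · rw [PowerSeries.coeff_C_mul, PowerSeries.coeff_X_pow, if_pos rfl, mul_one]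
        · intro b _ hb
          rw [PowerSeries.coeff_C_mul, PowerSeries.coeff_X_pow, if_neg (Ne.symm hb), mul_zero]
        · intro h
          exact absurd (Finset.mem_range.mpr (Nat.lt_succ_of_le hj)) h
      rw [hSj, hg]
      simp [PowerSeries.coeff_mk]
    have key : PowerSeries.coeff k ((S - g) * f) = 0 := by
      rw [PowerSeries.coeff_mul]
      apply Finset.sum_eq_zero
      intro p hp
      have hp1 : p.1 ≤ k := by
        rw [Finset.HasAntidiagonal.mem_antidiagonal] at hp
        omega
      rw [hdiff p.1 (le_trans hp1 hk), zero_mul]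
    have hSf : PowerSeries.coeff k (S * f) = PowerSeries.coeff k 1 := by
      have h2 : S * f = (S - g) * f + 1 := by rw [sub_mul, hgf]; ring
      rw [h2, map_add, key, zero_add]
    rw [mul_assoc, PowerSeries.coeff_C_mul, hSf, ← PowerSeries.coeff_C_mul, mul_one]
end

section
/- Fix an integer N ≥ 0. In ℚ[[X]] let f = (∑_{n=0}^{∞} ((2N)!/(2N+2n)!) X^{2n})^{-1} (the generating function ∑_{n≥0} E_{N,n} X^n/n! of the hypergeometric Euler numbers). Define P_m(X) = (2N+2m)!/(2N)! and Q_m(X) = (2N+2m)! · ∑_{n=0}^{m} X^{2n}/(2N+2n)!. Then: (i) for all m ≥ 2, P_m(X) = ((2N+2m−1)(2N+2m) + X^2) P_{m-1}(X) − (2N+2m−3)(2N+2m−2) X^2 P_{m-2}(X), and the same recurrence holds for Q_m; (ii) for all m ≥ 0, Q_m(X) · f ≡ P_m(X) (mod X^{2m+2}). -/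
open Finset PowerSeries

/-- Continued fraction convergents for the generating function of the
hypergeometric Euler numbers `E_{N,n}`, i.e. `f = (∑_n ((2N)!/(2N+2n)!) X^{2n})⁻¹` in `ℚ⟦X⟧`.
With `P m = (2N+2m)!/(2N)!` and `Q m = (2N+2m)! · ∑_{n=0}^m X^{2n}/(2N+2n)!`:
(i) for all `m ≥ 2` (written at index `m+2`) both satisfy
`P_m = ((2N+2m-1)(2N+2m) + X²) P_{m-1} - (2N+2m-3)(2N+2m-2) X² P_{m-2}`;
(ii) for all `m ≥ 0`, `Q m · f ≡ P m (mod X^{2m+2})`. -/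
theorem statement9 (N : ℕ)
    (f : PowerSeries ℚ)
    (hf : f = (PowerSeries.mk fun k =>
      if Even k then ((2 * N).factorial : ℚ) / ((2 * N + k).factorial : ℚ) else 0)⁻¹)
    (P Q : ℕ → PowerSeries ℚ)
    (hP : ∀ m, P m = PowerSeries.C (((2 * N + 2 * m).factorial : ℚ) /
      ((2 * N).factorial : ℚ)))
    (hQ : ∀ m, Q m = PowerSeries.C (((2 * N + 2 * m).factorial : ℚ)) *
      ∑ n ∈ Finset.range (m + 1),
        PowerSeries.C (1 / ((2 * N + 2 * n).factorial : ℚ)) * PowerSeries.X ^ (2 * n)) :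
    (∀ m : ℕ,
      P (m + 2) = (PowerSeries.C ((2 * (N : ℚ) + 2 * m + 3) * (2 * (N : ℚ) + 2 * m + 4)) +
            PowerSeries.X ^ 2) * P (m + 1)
          - PowerSeries.C ((2 * (N : ℚ) + 2 * m + 1) * (2 * (N : ℚ) + 2 * m + 2)) *
              PowerSeries.X ^ 2 * P m ∧
      Q (m + 2) = (PowerSeries.C ((2 * (N : ℚ) + 2 * m + 3) * (2 * (N : ℚ) + 2 * m + 4)) +
            PowerSeries.X ^ 2) * Q (m + 1)
          - PowerSeries.C ((2 * (N : ℚ) + 2 * m + 1) * (2 * (N : ℚ) + 2 * m + 2)) *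
              PowerSeries.X ^ 2 * Q m) ∧
    (∀ m : ℕ, ∀ k ≤ 2 * m + 1,
      PowerSeries.coeff k (Q m * f) = PowerSeries.coeff k (P m)) := by
  -- basic factorial cast facts
  have hfac : ∀ m : ℕ, ((2 * N + 2 * (m + 1)).factorial : ℚ)
      = (2 * (N : ℚ) + 2 * m + 1) * (2 * (N : ℚ) + 2 * m + 2)
        * ((2 * N + 2 * m).factorial : ℚ) := by
    intro m
    have h : 2 * N + 2 * (m + 1) = (2 * N + 2 * m) + 1 + 1 := by ring
    rw [h, Nat.factorial_succ, Nat.factorial_succ]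
    push_cast
    ring
  have hne : ∀ n : ℕ, ((n.factorial : ℚ)) ≠ 0 := fun n => by
    exact_mod_cast Nat.factorial_ne_zero n
  constructor
  · intro m
    constructor
    · -- P recurrence
      rw [hP, hP, hP]
      have h1 : PowerSeries.C (((2 * N + 2 * (m + 2)).factorial : ℚ) / ((2 * N).factorial : ℚ))
          = PowerSeries.C ((2 * (N : ℚ) + 2 * m + 3) * (2 * (N : ℚ) + 2 * m + 4)) *
            PowerSeries.C (((2 * N + 2 * (m + 1)).factorial : ℚ) / ((2 * N).factorial : ℚ)) := by
        rw [← map_mul]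
        congr 1
        have := hfac (m + 1)
        rw [this]
        push_cast
        ring
      have h2 : PowerSeries.C (((2 * N + 2 * (m + 1)).factorial : ℚ) / ((2 * N).factorial : ℚ))
          = PowerSeries.C ((2 * (N : ℚ) + 2 * m + 1) * (2 * (N : ℚ) + 2 * m + 2)) *
            PowerSeries.C (((2 * N + 2 * m).factorial : ℚ) / ((2 * N).factorial : ℚ)) := by
        rw [← map_mul]
        congr 1
        rw [hfac m]
        ring
      linear_combination h1 - PowerSeries.X ^ 2 * h2
    · -- Q recurrence
      rw [hQ, hQ, hQ, Finset.sum_range_succ, Finset.sum_range_succ (n := m + 1)]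
      set S := ∑ n ∈ Finset.range (m + 1),
        PowerSeries.C (1 / ((2 * N + 2 * n).factorial : ℚ)) * PowerSeries.X ^ (2 * n) with hS
      have h1 : PowerSeries.C (((2 * N + 2 * (m + 2)).factorial : ℚ))
          = PowerSeries.C ((2 * (N : ℚ) + 2 * m + 3) * (2 * (N : ℚ) + 2 * m + 4)) *
            PowerSeries.C (((2 * N + 2 * (m + 1)).factorial : ℚ)) := by
        rw [← map_mul]
        congr 1
        have := hfac (m + 1)
        rw [this]
        push_cast
        ring
      have h2 : PowerSeries.C (((2 * N + 2 * (m + 1)).factorial : ℚ))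
          = PowerSeries.C ((2 * (N : ℚ) + 2 * m + 1) * (2 * (N : ℚ) + 2 * m + 2)) *
            PowerSeries.C (((2 * N + 2 * m).factorial : ℚ)) := by
        rw [← map_mul]; congr 1; rw [hfac m]
      have h3 : PowerSeries.C (((2 * N + 2 * (m + 1)).factorial : ℚ)) *
          PowerSeries.C (1 / ((2 * N + 2 * (m + 1)).factorial : ℚ)) = 1 := by
        rw [← map_mul, mul_one_div, div_self (hne _), map_one]
      have h4 : PowerSeries.C (((2 * N + 2 * (m + 2)).factorial : ℚ)) *
          PowerSeries.C (1 / ((2 * N + 2 * (m + 2)).factorial : ℚ)) = 1 := by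
        rw [← map_mul, mul_one_div, div_self (hne _), map_one]
      linear_combination (S + PowerSeries.C (1 / ((2 * N + 2 * (m + 1)).factorial : ℚ)) *
          PowerSeries.X ^ (2 * (m + 1))) * h1
        + PowerSeries.X ^ (2 * (m + 2)) * h4
        - PowerSeries.X ^ 2 * PowerSeries.X ^ (2 * (m + 1)) * h3
        - PowerSeries.X ^ 2 * S * h2
  · -- part (ii)
    set g : PowerSeries ℚ := PowerSeries.mk fun k =>
      if Even k then ((2 * N).factorial : ℚ) / ((2 * N + k).factorial : ℚ) else 0 with hg
    have hg0 : PowerSeries.constantCoeff g = 1 := by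
      rw [hg]
      simp [PowerSeries.coeff_zero_eq_constantCoeff.symm, PowerSeries.coeff_mk]
      exact Nat.factorial_ne_zero _
    have hgf : g * f = 1 := by
      rw [hf]
      exact PowerSeries.mul_inv_cancel g (by rw [hg0]; exact one_ne_zero)
    intro m k hk
    -- key: coeff j (Q m) = coeff j (P m * g) for j ≤ 2m+1
    have key : ∀ j ≤ 2 * m + 1, PowerSeries.coeff j (Q m) = PowerSeries.coeff j (P m * g) := by
      intro j hj
      rw [hQ, hP]
      rw [PowerSeries.coeff_C_mul, PowerSeries.coeff_C_mul, map_sum]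
      simp only [PowerSeries.coeff_C_mul, PowerSeries.coeff_X_pow, hg, PowerSeries.coeff_mk]
      by_cases hje : Even j
      · obtain ⟨t, ht⟩ := hje
        have htm : t ≤ m := by omega
        have hsum : ∀ n ∈ Finset.range (m + 1),
            (1 / ((2 * N + 2 * n).factorial : ℚ)) * (if j = 2 * n then 1 else 0)
            = if n = t then 1 / ((2 * N + 2 * t).factorial : ℚ) else 0 := by
          intro n _
          by_cases h : j = 2 * n
          · have : n = t := by omega
            simp [h, this]
          · have : n ≠ t := by omega
            simp [h, this]
        rw [Finset.sum_congr rfl hsum, Finset.sum_ite_eq' (Finset.range (m + 1)) t]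
        rw [if_pos (Finset.mem_range.mpr (by omega))]
        rw [if_pos ⟨t, ht⟩]
        have hj2 : 2 * N + j = 2 * N + 2 * t := by omega
        rw [hj2]
        field_simp
      · rw [if_neg hje]
        have : ∀ n ∈ Finset.range (m + 1),
            (1 / ((2 * N + 2 * n).factorial : ℚ)) * (if j = 2 * n then 1 else 0) = 0 := by
          intro n _
          have : j ≠ 2 * n := by
            intro h; exact hje ⟨n, by omega⟩
          simp [this]
        rw [Finset.sum_congr rfl this, Finset.sum_const_zero]
        ring
    have hsub : Q m * f - P m = (Q m - P m * g) * f := by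
      rw [sub_mul, mul_assoc, hgf, mul_one]
    have : PowerSeries.coeff k ((Q m - P m * g) * f) = 0 := by
      rw [PowerSeries.coeff_mul]
      apply Finset.sum_eq_zero
      intro p hp
      have hp1 : p.1 ≤ 2 * m + 1 := by
        have := Finset.HasAntidiagonal.antidiagonal.fst_le hp
        omega
      rw [map_sub, key p.1 hp1, sub_self, zero_mul]
    have h0 : PowerSeries.coeff k (Q m * f) - PowerSeries.coeff k (P m) = 0 := by
      rw [← map_sub, hsub]; exact this
    linarith
end

section
/- In ℚ[[X]], let C = ∑_{n≥0} X^{2n}/(2n)! (the formal power series of cosh X) and let f = C^{-1} = ∑_{n≥0} E_n X^n/n!, the generating function of the Euler numbers. Define Q_m(X) = (2m)! · ∑_{n=0}^{m} X^{2n}/(2n)!. Then: (i) for all m ≥ 2, Q_m(X) = ((2m−1)(2m) + X^2) Q_{m-1}(X) − (2m−3)(2m−2) X^2 Q_{m-2}(X), with Q_0 = 1 and Q_1(X) = 2 + X^2; (ii) for all m ≥ 0, (∑_{n=0}^{m} X^{2n}/(2n)!) · f ≡ 1 (mod X^{2m+2}). -/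
open Finset PowerSeries

/-- In `ℚ⟦X⟧`, let `C = cosh X = ∑_n X^{2n}/(2n)!` and `f = C⁻¹`
(the generating function of the Euler numbers).  With `Q m = (2m)! · ∑_{n=0}^m X^{2n}/(2n)!`:
(i) for all `m ≥ 2` (written at index `m+2`),
`Q_m = ((2m-1)(2m) + X²) Q_{m-1} - (2m-3)(2m-2) X² Q_{m-2}`, with `Q_0 = 1`, `Q_1 = 2 + X²`;
(ii) for all `m ≥ 0`, `(∑_{n=0}^m X^{2n}/(2n)!) · f ≡ 1 (mod X^{2m+2})`. -/
theorem statement10 (Ch f : PowerSeries ℚ)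
    (hCh : Ch = PowerSeries.mk fun k => if Even k then 1 / (k.factorial : ℚ) else 0)
    (hf : f = Ch⁻¹)
    (Q : ℕ → PowerSeries ℚ)
    (hQ : ∀ m, Q m = PowerSeries.C (((2 * m).factorial : ℚ)) *
      ∑ n ∈ Finset.range (m + 1),
        PowerSeries.C (1 / ((2 * n).factorial : ℚ)) * PowerSeries.X ^ (2 * n)) :
    (∀ m : ℕ,
      Q (m + 2) = (PowerSeries.C ((2 * (m : ℚ) + 3) * (2 * (m : ℚ) + 4)) +
            PowerSeries.X ^ 2) * Q (m + 1)
          - PowerSeries.C ((2 * (m : ℚ) + 1) * (2 * (m : ℚ) + 2)) *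
              PowerSeries.X ^ 2 * Q m) ∧
    Q 0 = 1 ∧ Q 1 = PowerSeries.C (2 : ℚ) + PowerSeries.X ^ 2 ∧
    (∀ m : ℕ, ∀ k ≤ 2 * m + 1,
      PowerSeries.coeff (R := ℚ) k
        ((∑ n ∈ Finset.range (m + 1),
            PowerSeries.C (1 / ((2 * n).factorial : ℚ)) * PowerSeries.X ^ (2 * n)) * f) =
        PowerSeries.coeff (R := ℚ) k 1) := by
  refine ⟨?_, ?_, ?_, ?_⟩
  · intro m
    have hBn : ((2 * (m+1)).factorial : ℚ) = (2*(m:ℚ)+1) * (2*(m:ℚ)+2) * ((2*m).factorial : ℚ) := by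
      have : 2 * (m+1) = (2*m) + 1 + 1 := by ring
      rw [this, Nat.factorial_succ, Nat.factorial_succ]
      push_cast; ring
    have hDn : ((2 * (m+1+1)).factorial : ℚ) = (2*(m:ℚ)+3) * (2*(m:ℚ)+4) * ((2*(m+1)).factorial : ℚ) := by
      have : 2 * (m+1+1) = (2*(m+1)) + 1 + 1 := by ring
      rw [this, Nat.factorial_succ, Nat.factorial_succ]
      push_cast; ring
    have hB0 : ((2 * (m+1)).factorial : ℚ) ≠ 0 := Nat.cast_ne_zero.2 (Nat.factorial_ne_zero _)
    have hD0 : ((2 * (m+1+1)).factorial : ℚ) ≠ 0 := Nat.cast_ne_zero.2 (Nat.factorial_ne_zero _)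
    have hD' : (PowerSeries.C) ((2 * (m+1+1)).factorial : ℚ)
        = PowerSeries.C ((2*(m:ℚ)+3) * (2*(m:ℚ)+4)) * PowerSeries.C ((2*(m+1)).factorial : ℚ) := by
      rw [← map_mul, hDn]
    have hB' : (PowerSeries.C) ((2 * (m+1)).factorial : ℚ)
        = PowerSeries.C ((2*(m:ℚ)+1) * (2*(m:ℚ)+2)) * PowerSeries.C ((2*m).factorial : ℚ) := by
      rw [← map_mul, hBn]
    have hinvB : PowerSeries.C (1 / ((2*(m+1)).factorial : ℚ)) * PowerSeries.C ((2*(m+1)).factorial : ℚ) = 1 := by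
      rw [← map_mul, one_div, inv_mul_cancel₀ hB0, map_one]
    have hinvD : PowerSeries.C (1 / ((2*(m+1+1)).factorial : ℚ)) * PowerSeries.C ((2*(m+1+1)).factorial : ℚ) = 1 := by
      rw [← map_mul, one_div, inv_mul_cancel₀ hD0, map_one]
    rw [hQ, hQ, hQ, Finset.sum_range_succ ((fun n => PowerSeries.C (1 / ((2 * n).factorial : ℚ)) * PowerSeries.X ^ (2 * n))) (m+1+1),
      Finset.sum_range_succ ((fun n => PowerSeries.C (1 / ((2 * n).factorial : ℚ)) * PowerSeries.X ^ (2 * n))) (m+1)]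
    set T := ∑ n ∈ Finset.range (m + 1), PowerSeries.C (1 / ((2 * n).factorial : ℚ)) * PowerSeries.X ^ (2 * n) with hT
    linear_combination (T + PowerSeries.C (1 / ((2*(m+1)).factorial : ℚ)) * PowerSeries.X ^ (2*(m+1))) * hD'
      + PowerSeries.X ^ (2*(m+1+1)) * hinvD - PowerSeries.X ^ (2*(m+1+1)) * hinvB
      - PowerSeries.X ^ 2 * T * hB'
  · rw [hQ]; simp
  · rw [hQ, Finset.sum_range_succ]
    norm_num [Nat.factorial]
    rw [mul_add, mul_one, ← mul_assoc, ← map_mul]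
    norm_num
  · intro m k hk
    have hC0 : PowerSeries.constantCoeff Ch ≠ 0 := by
      rw [hCh]; simp [PowerSeries.constantCoeff_mk]
    have hmul : Ch * f = 1 := by
      rw [hf, PowerSeries.mul_inv_cancel _ hC0]
    have hS : ∀ i ≤ 2*m+1, (PowerSeries.coeff i)
        (∑ n ∈ Finset.range (m + 1), PowerSeries.C (1 / ((2 * n).factorial : ℚ)) * PowerSeries.X ^ (2 * n))
        = PowerSeries.coeff i Ch := by
      intro i hi
      rw [hCh, map_sum]
      simp only [PowerSeries.coeff_C_mul, PowerSeries.coeff_X_pow, PowerSeries.coeff_mk]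
      by_cases he : Even i
      · obtain ⟨j, hj⟩ := he
        have hij : i = 2*j := by omega
        have hjm : j ∈ Finset.range (m+1) := by
          simp only [Finset.mem_range]; omega
        rw [Finset.sum_eq_single j]
        · simp [hij]
        · intro b _ hb
          have : i ≠ 2*b := by omega
          simp [this]
        · intro h; exact absurd hjm h
      · rw [if_neg he]
        apply Finset.sum_eq_zero
        intro b _
        have : i ≠ 2*b := by
          intro h; exact he ⟨b, by omega⟩
        simp [this]
    rw [PowerSeries.coeff_mul]
    have : (PowerSeries.coeff k) 1 = PowerSeries.coeff k (Ch * f) := by rw [hmul]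
    rw [this, PowerSeries.coeff_mul]
    refine Finset.sum_congr rfl fun p hp => ?_
    rw [hS p.1 ?_]
    have := Finset.HasAntidiagonal.antidiagonal.fst_le hp
    omega
end

section
/- Fix an integer N ≥ 0. In ℚ[[X]] let f = (∑_{n=0}^{∞} ((2N+1)!/(2N+2n+1)!) X^{2n})^{-1} (the generating function ∑_{n≥0} Ê_{N,n} X^n/n! of the hypergeometric Euler numbers of the second kind). Define P_m(X) = (2N+2m+1)!/(2N+1)! and Q_m(X) = (2N+2m+1)! · ∑_{n=0}^{m} X^{2n}/(2N+2n+1)!. Then: (i) for all m ≥ 2, P_m(X) = ((2N+2m)(2N+2m+1) + X^2) P_{m-1}(X) − (2N+2m−2)(2N+2m−1) X^2 P_{m-2}(X), and the same recurrence holds for Q_m; (ii) for all m ≥ 0, Q_m(X) · f ≡ P_m(X) (mod X^{2m+2}). -/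
open Finset PowerSeries

private lemma coeff_mul_congr (A B Cc : PowerSeries ℚ) (k : ℕ)
    (h : ∀ j ≤ k, PowerSeries.coeff j A = PowerSeries.coeff j B) :
    PowerSeries.coeff k (A * Cc) = PowerSeries.coeff k (B * Cc) := by
  rw [PowerSeries.coeff_mul, PowerSeries.coeff_mul]
  refine Finset.sum_congr rfl fun p hp => ?_
  rw [Finset.HasAntidiagonal.mem_antidiagonal] at hp
  rw [h p.1 (by omega)]

/-- Continued fraction convergents for the generating function of the
hypergeometric Euler numbers of the second kind `Ê_{N,n}`, i.e.
`f = (∑_n ((2N+1)!/(2N+2n+1)!) X^{2n})⁻¹` in `ℚ⟦X⟧`.  With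
`P m = (2N+2m+1)!/(2N+1)!` and `Q m = (2N+2m+1)! · ∑_{n=0}^m X^{2n}/(2N+2n+1)!`:
(i) for all `m ≥ 2` (written at index `m+2`) both satisfy
`P_m = ((2N+2m)(2N+2m+1) + X²) P_{m-1} - (2N+2m-2)(2N+2m-1) X² P_{m-2}`;
(ii) for all `m ≥ 0`, `Q m · f ≡ P m (mod X^{2m+2})`. -/
theorem statement11 (N : ℕ)
    (f : PowerSeries ℚ)
    (hf : f = (PowerSeries.mk fun k =>
      if Even k then ((2 * N + 1).factorial : ℚ) / ((2 * N + k + 1).factorial : ℚ) else 0)⁻¹)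
    (P Q : ℕ → PowerSeries ℚ)
    (hP : ∀ m, P m = PowerSeries.C (((2 * N + 2 * m + 1).factorial : ℚ) /
      ((2 * N + 1).factorial : ℚ)))
    (hQ : ∀ m, Q m = PowerSeries.C (((2 * N + 2 * m + 1).factorial : ℚ)) *
      ∑ n ∈ Finset.range (m + 1),
        PowerSeries.C (1 / ((2 * N + 2 * n + 1).factorial : ℚ)) * PowerSeries.X ^ (2 * n)) :
    (∀ m : ℕ,
      P (m + 2) = (PowerSeries.C ((2 * (N : ℚ) + 2 * m + 4) * (2 * (N : ℚ) + 2 * m + 5)) +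
            PowerSeries.X ^ 2) * P (m + 1)
          - PowerSeries.C ((2 * (N : ℚ) + 2 * m + 2) * (2 * (N : ℚ) + 2 * m + 3)) *
              PowerSeries.X ^ 2 * P m ∧
      Q (m + 2) = (PowerSeries.C ((2 * (N : ℚ) + 2 * m + 4) * (2 * (N : ℚ) + 2 * m + 5)) +
            PowerSeries.X ^ 2) * Q (m + 1)
          - PowerSeries.C ((2 * (N : ℚ) + 2 * m + 2) * (2 * (N : ℚ) + 2 * m + 3)) *
              PowerSeries.X ^ 2 * Q m) ∧
    (∀ m : ℕ, ∀ k ≤ 2 * m + 1,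
      PowerSeries.coeff k (Q m * f) = PowerSeries.coeff k (P m)) := by
  have hfacne : ∀ t : ℕ, ((t.factorial : ℚ)) ≠ 0 := fun t => by
    exact_mod_cast Nat.cast_ne_zero.mpr t.factorial_ne_zero
  have hfac1 : ∀ m : ℕ, ((2 * N + 2 * (m + 1) + 1).factorial : ℚ) =
      (2 * (N : ℚ) + 2 * m + 2) * (2 * (N : ℚ) + 2 * m + 3) *
        ((2 * N + 2 * m + 1).factorial : ℚ) := by
    intro m
    have e : 2 * N + 2 * (m + 1) + 1 = (2 * N + 2 * m + 1) + 1 + 1 := by ring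
    rw [e, Nat.factorial_succ, Nat.factorial_succ]
    push_cast; ring
  have hfac2 : ∀ m : ℕ, ((2 * N + 2 * (m + 2) + 1).factorial : ℚ) =
      (2 * (N : ℚ) + 2 * m + 4) * (2 * (N : ℚ) + 2 * m + 5) *
        ((2 * N + 2 * (m + 1) + 1).factorial : ℚ) := by
    intro m
    have e : 2 * N + 2 * (m + 2) + 1 = (2 * N + 2 * (m + 1) + 1) + 1 + 1 := by ring
    rw [e, Nat.factorial_succ, Nat.factorial_succ]
    push_cast; ring
  refine ⟨fun m => ⟨?_, ?_⟩, ?_⟩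
  · -- P recurrence
    rw [hP, hP, hP, div_eq_mul_inv, div_eq_mul_inv, div_eq_mul_inv, hfac2 m, hfac1 m]
    simp only [map_mul]
    ring
  · -- Q recurrence
    rw [hQ, hQ, hQ, Finset.sum_range_succ (n := m + 2), Finset.sum_range_succ (n := m + 1)]
    have e3 : PowerSeries.C ((2 * N + 2 * (m + 1) + 1).factorial : ℚ) *
        PowerSeries.C (1 / ((2 * N + 2 * (m + 1) + 1).factorial : ℚ)) = 1 := by
      rw [← map_mul, mul_one_div, div_self (hfacne _), map_one]
    have e4 : PowerSeries.C ((2 * N + 2 * (m + 2) + 1).factorial : ℚ) *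
        PowerSeries.C (1 / ((2 * N + 2 * (m + 2) + 1).factorial : ℚ)) = 1 := by
      rw [← map_mul, mul_one_div, div_self (hfacne _), map_one]
    have e1 : PowerSeries.C ((2 * N + 2 * (m + 2) + 1).factorial : ℚ) =
        PowerSeries.C ((2 * (N : ℚ) + 2 * m + 4) * (2 * (N : ℚ) + 2 * m + 5)) *
          PowerSeries.C ((2 * N + 2 * (m + 1) + 1).factorial : ℚ) := by
      rw [← map_mul, ← hfac2 m]
    have e2 : PowerSeries.C ((2 * N + 2 * (m + 1) + 1).factorial : ℚ) =
        PowerSeries.C ((2 * (N : ℚ) + 2 * m + 2) * (2 * (N : ℚ) + 2 * m + 3)) *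
          PowerSeries.C ((2 * N + 2 * m + 1).factorial : ℚ) := by
      rw [← map_mul, ← hfac1 m]
    have ex1 : (PowerSeries.X : PowerSeries ℚ) ^ (2 * (m + 1)) * PowerSeries.X ^ 2 =
        PowerSeries.X ^ (2 * (m + 2)) := by
      rw [← pow_add]; congr 1
    set S0 := ∑ n ∈ Finset.range (m + 1),
      PowerSeries.C (1 / ((2 * N + 2 * n + 1).factorial : ℚ)) * PowerSeries.X ^ (2 * n)
    set Y1 := (PowerSeries.X : PowerSeries ℚ) ^ (2 * (m + 1))
    set Y2 := (PowerSeries.X : PowerSeries ℚ) ^ (2 * (m + 2))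
    linear_combination (S0 + PowerSeries.C (1 / ((2 * N + 2 * (m + 1) + 1).factorial : ℚ)) * Y1) * e1
      + (Y1 * PowerSeries.X ^ 2) * e4
      - (PowerSeries.X ^ 2 * S0) * e2
      - (PowerSeries.X ^ 2 * Y1) * e3
      + (PowerSeries.C ((2 * N + 2 * (m + 2) + 1).factorial : ℚ)
          * PowerSeries.C (1 / ((2 * N + 2 * (m + 2) + 1).factorial : ℚ))) * (ex1.symm)
  · -- convergence part
    intro m k hk
    set g : PowerSeries ℚ := PowerSeries.mk fun k =>
      if Even k then ((2 * N + 1).factorial : ℚ) / ((2 * N + k + 1).factorial : ℚ) else 0 with hg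
    have hgc : PowerSeries.constantCoeff g ≠ 0 := by
      rw [hg]
      simp only [← PowerSeries.coeff_zero_eq_constantCoeff, PowerSeries.coeff_mk]
      norm_num [div_self (hfacne (2 * N + 1))]
    have hginv : g * f = 1 := by rw [hf]; exact PowerSeries.mul_inv_cancel g hgc
    have hagree : ∀ j ≤ 2 * m + 1,
        PowerSeries.coeff j (Q m) = PowerSeries.coeff j (P m * g) := by
      intro j hj
      rw [hQ, hP]
      rw [PowerSeries.coeff_C_mul, PowerSeries.coeff_C_mul]
      rw [hg, PowerSeries.coeff_mk, map_sum]
      simp only [PowerSeries.coeff_C_mul, PowerSeries.coeff_X_pow]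
      by_cases hEv : Even j
      · obtain ⟨t, ht⟩ := hEv
        have htm : t ≤ m := by omega
        rw [if_pos ⟨t, ht⟩]
        rw [Finset.sum_eq_single t]
        · rw [if_pos (by omega), mul_one]
          have ej : 2 * N + j + 1 = 2 * N + 2 * t + 1 := by omega
          rw [ej]
          field_simp
        · intro b _ hb
          rw [if_neg (by omega), mul_zero]
        · intro hb
          exact absurd (Finset.mem_range.mpr (by omega)) hb
      · rw [if_neg hEv]
        rw [mul_zero, Finset.sum_eq_zero, mul_zero]
        intro b _
        rw [if_neg (by intro h; exact hEv ⟨b, by omega⟩), mul_zero]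
    calc PowerSeries.coeff k (Q m * f) = PowerSeries.coeff k ((P m * g) * f) :=
          coeff_mul_congr _ _ _ k (fun j hj => hagree j (le_trans hj hk))
      _ = PowerSeries.coeff k (P m) := by rw [mul_assoc, hginv, mul_one]
end

section
/- In ℚ[[X]], let S = ∑_{n≥0} X^{2n}/(2n+1)! (the formal power series of (sinh X)/X) and let f = S^{-1} = ∑_{n≥0} Ê_n X^n/n!, the generating function of the Euler numbers of the second kind. Define Q_m(X) = (2m+1)! · ∑_{n=0}^{m} X^{2n}/(2n+1)!. Then: (i) for all m ≥ 2, Q_m(X) = ((2m)(2m+1) + X^2) Q_{m-1}(X) − (2m−2)(2m−1) X^2 Q_{m-2}(X), with Q_0 = 1 and Q_1(X) = 6 + X^2; (ii) for all m ≥ 0, (∑_{n=0}^{m} X^{2n}/(2n+1)!) · f ≡ 1 (mod X^{2m+2}). -/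
open Finset PowerSeries

/-- In `ℚ⟦X⟧`, let `S = (sinh X)/X = ∑_n X^{2n}/(2n+1)!` and `f = S⁻¹`
(the generating function of the Euler numbers of the second kind).  With
`Q m = (2m+1)! · ∑_{n=0}^m X^{2n}/(2n+1)!`:
(i) for all `m ≥ 2` (written at index `m+2`),
`Q_m = ((2m)(2m+1) + X²) Q_{m-1} - (2m-2)(2m-1) X² Q_{m-2}`, with `Q_0 = 1`, `Q_1 = 6 + X²`;
(ii) for all `m ≥ 0`, `(∑_{n=0}^m X^{2n}/(2n+1)!) · f ≡ 1 (mod X^{2m+2})`. -/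
theorem statement12 (S f : PowerSeries ℚ)
    (hS : S = PowerSeries.mk fun k => if Even k then 1 / ((k + 1).factorial : ℚ) else 0)
    (hf : f = S⁻¹)
    (Q : ℕ → PowerSeries ℚ)
    (hQ : ∀ m, Q m = PowerSeries.C (((2 * m + 1).factorial : ℚ)) *
      ∑ n ∈ Finset.range (m + 1),
        PowerSeries.C (1 / ((2 * n + 1).factorial : ℚ)) * PowerSeries.X ^ (2 * n)) :
    (∀ m : ℕ,
      Q (m + 2) = (PowerSeries.C ((2 * (m : ℚ) + 4) * (2 * (m : ℚ) + 5)) +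
            PowerSeries.X ^ 2) * Q (m + 1)
          - PowerSeries.C ((2 * (m : ℚ) + 2) * (2 * (m : ℚ) + 3)) *
              PowerSeries.X ^ 2 * Q m) ∧
    Q 0 = 1 ∧ Q 1 = PowerSeries.C 6 + PowerSeries.X ^ 2 ∧
    (∀ m : ℕ, ∀ k ≤ 2 * m + 1,
      PowerSeries.coeff k
        ((∑ n ∈ Finset.range (m + 1),
            PowerSeries.C (1 / ((2 * n + 1).factorial : ℚ)) * PowerSeries.X ^ (2 * n)) * f) =
        PowerSeries.coeff k 1) := by
  refine ⟨?_, ?_, ?_, ?_⟩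
  · intro m
    have hf3 : ((2 * (m + 1) + 1).factorial : ℚ) =
        (2 * (m : ℚ) + 2) * (2 * (m : ℚ) + 3) * ((2 * m + 1).factorial : ℚ) := by
      have : (2 * (m + 1) + 1).factorial = (2 * m + 3) * ((2 * m + 2) * (2 * m + 1).factorial) := by
        rw [show 2 * (m + 1) + 1 = (2 * m + 2) + 1 from by ring, Nat.factorial_succ,
          show 2 * m + 2 = (2 * m + 1) + 1 from rfl, Nat.factorial_succ]
      rw [this]; push_cast; ring
    have hf5 : ((2 * (m + 2) + 1).factorial : ℚ) =
        (2 * (m : ℚ) + 4) * (2 * (m : ℚ) + 5) * ((2 * (m + 1) + 1).factorial : ℚ) := by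
      have : (2 * (m + 2) + 1).factorial =
          (2 * m + 5) * ((2 * m + 4) * (2 * (m + 1) + 1).factorial) := by
        rw [show 2 * (m + 2) + 1 = (2 * m + 4) + 1 from by ring, Nat.factorial_succ,
          show 2 * m + 4 = (2 * (m + 1) + 1) + 1 from by ring, Nat.factorial_succ]
        ring
      rw [this]; push_cast; ring
    have h3ne : ((2 * (m + 1) + 1).factorial : ℚ) ≠ 0 := by
      exact_mod_cast Nat.factorial_ne_zero _
    have h5ne : ((2 * (m + 2) + 1).factorial : ℚ) ≠ 0 := by
      exact_mod_cast Nat.factorial_ne_zero _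
    have E1 : PowerSeries.C ((2 * (m + 2) + 1).factorial : ℚ) =
        PowerSeries.C ((2 * (m : ℚ) + 4) * (2 * (m : ℚ) + 5)) *
          PowerSeries.C ((2 * (m + 1) + 1).factorial : ℚ) := by
      rw [← map_mul]; exact congrArg _ (by rw [hf5])
    have E5 : PowerSeries.C ((2 * (m + 1) + 1).factorial : ℚ) =
        PowerSeries.C ((2 * (m : ℚ) + 2) * (2 * (m : ℚ) + 3)) *
          PowerSeries.C ((2 * m + 1).factorial : ℚ) := by
      rw [← map_mul]; exact congrArg _ (by rw [hf3])
    have E2 : PowerSeries.C ((2 * (m + 1) + 1).factorial : ℚ) *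
        PowerSeries.C (1 / ((2 * (m + 1) + 1).factorial : ℚ)) = 1 := by
      rw [← map_mul, mul_one_div, div_self h3ne, map_one]
    have E4 : PowerSeries.C ((2 * (m + 2) + 1).factorial : ℚ) *
        PowerSeries.C (1 / ((2 * (m + 2) + 1).factorial : ℚ)) = 1 := by
      rw [← map_mul, mul_one_div, div_self h5ne, map_one]
    have E3 : PowerSeries.C ((2 * (m + 2) + 1).factorial : ℚ) *
        PowerSeries.C (1 / ((2 * (m + 1) + 1).factorial : ℚ)) =
        PowerSeries.C ((2 * (m : ℚ) + 4) * (2 * (m : ℚ) + 5)) := by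
      rw [← map_mul]
      refine congrArg _ ?_
      rw [hf5]; field_simp
    simp only [hQ]
    rw [Finset.sum_range_succ, Finset.sum_range_succ]
    set T := ∑ n ∈ Finset.range (m + 1),
      PowerSeries.C (1 / ((2 * n + 1).factorial : ℚ)) * PowerSeries.X ^ (2 * n) with hT
    linear_combination T * E1 - PowerSeries.X ^ 2 * T * E5 +
      PowerSeries.X ^ (2 * (m + 1)) * E3 -
      PowerSeries.X ^ (2 * (m + 1)) *
        PowerSeries.C ((2 * (m : ℚ) + 4) * (2 * (m : ℚ) + 5)) * E2 +
      PowerSeries.X ^ (2 * (m + 2)) * E4 - PowerSeries.X ^ (2 * (m + 2)) * E2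
  · rw [hQ]; simp
  · rw [hQ]
    rw [Finset.sum_range_succ, Finset.sum_range_succ]
    norm_num [Nat.factorial, ← map_mul]
    rw [mul_add, mul_one, ← mul_assoc, ← map_mul]
    norm_num
  · intro m k hk
    have hS0 : PowerSeries.constantCoeff S ≠ 0 := by
      rw [hS]
      simp [PowerSeries.constantCoeff_mk]
    have hSf : S * f = 1 := by
      rw [hf]; exact PowerSeries.mul_inv_cancel _ hS0
    have key : ∀ i ≤ 2 * m + 1,
        (PowerSeries.coeff i) (∑ n ∈ Finset.range (m + 1),
          PowerSeries.C (1 / ((2 * n + 1).factorial : ℚ)) * PowerSeries.X ^ (2 * n)) =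
        PowerSeries.coeff i S := by
      intro i hi
      rw [hS, map_sum]
      simp only [PowerSeries.coeff_C_mul, PowerSeries.coeff_X_pow, PowerSeries.coeff_mk]
      by_cases h : Even i
      · obtain ⟨j, hj⟩ := h
        subst hj
        rw [Finset.sum_eq_single j]
        · rw [if_pos (by omega), if_pos ⟨j, rfl⟩, mul_one, two_mul]
        · intro b _ hne
          rw [if_neg (by omega), mul_zero]
        · intro hj'
          simp only [Finset.mem_range] at hj'
          omega
      · rw [if_neg h, Finset.sum_eq_zero]
        intro b _
        rw [if_neg (fun h' => h ⟨b, by omega⟩), mul_zero]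
    have : (PowerSeries.coeff k) ((∑ n ∈ Finset.range (m + 1),
        PowerSeries.C (1 / ((2 * n + 1).factorial : ℚ)) * PowerSeries.X ^ (2 * n)) * f) =
        (PowerSeries.coeff k) (S * f) := by
      rw [PowerSeries.coeff_mul, PowerSeries.coeff_mul]
      refine Finset.sum_congr rfl fun p hp => ?_
      rw [key p.1 (le_trans (Finset.HasAntidiagonal.antidiagonal.fst_le hp) hk)]
    rw [this, hSf]
end

section
/- Let a, b be positive reals and m ≥ 1 an integer. Let h_n^{(m)}(a,b) = ∑_{k=1}^{n} 1/((k−1)a+b)^m for n ≥ 1 and h_0^{(m)}(a,b) = 0. Define P_n(X) = ((b|a)^{(n)})^m · ∑_{k=1}^{n} X^k/((k−1)a+b)^m and Q_n(X) = ((b|a)^{(n)})^m (1−X), where (b|a)^{(n)} = b(b+a)(b+2a)⋯(b+(n−1)a). Then: (i) for all n ≥ 3, P_n(X) = (((n−1)a+b)^m + ((n−2)a+b)^m X) P_{n-1}(X) − ((n−2)a+b)^{2m} X P_{n-2}(X), and the same recurrence holds for Q_n; (ii) for all n ≥ 0, Q_n(X) · (∑_{k≥1} h_k^{(m)}(a,b)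 X^k) ≡ P_n(X) (mod X^{n+1}) in ℝ[[X]]. -/
open Finset PowerSeries

/-- For positive reals `a, b` and integer `m ≥ 1`, let
`h n = ∑_{k=1}^n 1/((k-1)a+b)^m` (generalized harmonic numbers of order `m`), written here
as `∑_{k ∈ range n} 1/(k·a+b)^m`.  With the generalized rising factorial
`(b|a)^{(n)} = ∏_{i<n} (b + i·a)`, define
`P n = ((b|a)^{(n)})^m · ∑_{k=1}^n X^k/((k-1)a+b)^m` and `Q n = ((b|a)^{(n)})^m (1 - X)`.
Then: (i) for all `n ≥ 3` (written at index `n+3`),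
`P_n = (((n-1)a+b)^m + ((n-2)a+b)^m X) P_{n-1} - ((n-2)a+b)^{2m} X P_{n-2}`, same for `Q`;
(ii) for all `n ≥ 0`, `Q n · ∑_{k≥1} h_k X^k ≡ P n (mod X^{n+1})` in `ℝ⟦X⟧`. -/
theorem statement13 (a b : ℝ) (ha : 0 < a) (hb : 0 < b) (m : ℕ) (hm : 1 ≤ m)
    (h : ℕ → ℝ) (hh : ∀ n, h n = ∑ k ∈ Finset.range n, 1 / ((k : ℝ) * a + b) ^ m)
    (P Q : ℕ → PowerSeries ℝ)
    (hP : ∀ n, P n = PowerSeries.C ((∏ i ∈ Finset.range n, (b + (i : ℝ) * a)) ^ m) *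
      ∑ k ∈ Finset.range n,
        PowerSeries.C (1 / ((k : ℝ) * a + b) ^ m) * PowerSeries.X ^ (k + 1))
    (hQ : ∀ n, Q n = PowerSeries.C ((∏ i ∈ Finset.range n, (b + (i : ℝ) * a)) ^ m) *
      (1 - PowerSeries.X)) :
    (∀ n : ℕ,
      P (n + 3) = (PowerSeries.C ((((n : ℝ) + 2) * a + b) ^ m) +
            PowerSeries.C ((((n : ℝ) + 1) * a + b) ^ m) * PowerSeries.X) * P (n + 2)
          - PowerSeries.C ((((n : ℝ) + 1) * a + b) ^ (2 * m)) * PowerSeries.X * P (n + 1) ∧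
      Q (n + 3) = (PowerSeries.C ((((n : ℝ) + 2) * a + b) ^ m) +
            PowerSeries.C ((((n : ℝ) + 1) * a + b) ^ m) * PowerSeries.X) * Q (n + 2)
          - PowerSeries.C ((((n : ℝ) + 1) * a + b) ^ (2 * m)) * PowerSeries.X * Q (n + 1)) ∧
    (∀ n : ℕ, ∀ k ≤ n,
      PowerSeries.coeff k (Q n * PowerSeries.mk h) = PowerSeries.coeff k (P n)) := by
  constructor
  · intro n
    have hc1 : (((n : ℝ) + 1) * a + b) ≠ 0 := by positivity
    have hc2 : (((n : ℝ) + 2) * a + b) ≠ 0 := by positivity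
    have e1 : (PowerSeries.C) ((((n : ℝ) + 1) * a + b) ^ m) *
        (PowerSeries.C) (1 / (((n : ℝ) + 1) * a + b) ^ m) = 1 := by
      rw [← map_mul, mul_one_div, div_self (pow_ne_zero _ hc1), map_one]
    have e2 : (PowerSeries.C) ((((n : ℝ) + 2) * a + b) ^ m) *
        (PowerSeries.C) (1 / (((n : ℝ) + 2) * a + b) ^ m) = 1 := by
      rw [← map_mul, mul_one_div, div_self (pow_ne_zero _ hc2), map_one]
    have h2m : ((((n : ℝ) + 1) * a + b) ^ (2 * m))
        = (((n : ℝ) + 1) * a + b) ^ m * (((n : ℝ) + 1) * a + b) ^ m := by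
      rw [two_mul, pow_add]
    constructor
    · rw [hP, hP, hP,
        show n + 3 = (n + 2) + 1 from rfl, Finset.prod_range_succ, Finset.sum_range_succ,
        show n + 2 = (n + 1) + 1 from rfl, Finset.prod_range_succ, Finset.sum_range_succ]
      push_cast
      rw [show b + ((n : ℝ) + 1) * a = ((n : ℝ) + 1) * a + b from by ring,
        show b + ((n : ℝ) + 1 + 1) * a = ((n : ℝ) + 2) * a + b from by ring,
        show ((n : ℝ) + 1 + 1) * a + b = ((n : ℝ) + 2) * a + b from by ring, h2m]
      simp only [mul_pow, map_mul]
      set u := (PowerSeries.C) ((∏ i ∈ Finset.range (n + 1), (b + (i : ℝ) * a)) ^ m)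
      set A := (PowerSeries.C) ((((n : ℝ) + 1) * a + b) ^ m)
      linear_combination (u * A * PowerSeries.X * PowerSeries.X ^ (n + 2)) * e2 -
        (u * A * PowerSeries.X * PowerSeries.X ^ (n + 2)) * e1
    · rw [hQ, hQ, hQ,
        show n + 3 = (n + 2) + 1 from rfl, Finset.prod_range_succ,
        show n + 2 = (n + 1) + 1 from rfl, Finset.prod_range_succ]
      push_cast
      rw [show b + ((n : ℝ) + 1) * a = ((n : ℝ) + 1) * a + b from by ring,
        show b + ((n : ℝ) + 1 + 1) * a = ((n : ℝ) + 2) * a + b from by ring, h2m]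
      simp only [mul_pow, map_mul]
      ring
  · intro n k hk
    rw [hQ, hP]
    match k with
    | 0 =>
      simp [hh]
    | j + 1 =>
      rw [show PowerSeries.C ((∏ i ∈ Finset.range n, (b + (i : ℝ) * a)) ^ m) *
            (1 - PowerSeries.X) * PowerSeries.mk h
          = PowerSeries.C ((∏ i ∈ Finset.range n, (b + (i : ℝ) * a)) ^ m) *
              PowerSeries.mk h
            - PowerSeries.C ((∏ i ∈ Finset.range n, (b + (i : ℝ) * a)) ^ m) *
              (PowerSeries.X * PowerSeries.mk h) from by ring]
      rw [map_sub, PowerSeries.coeff_C_mul, PowerSeries.coeff_C_mul,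
        PowerSeries.coeff_succ_X_mul, PowerSeries.coeff_mk, PowerSeries.coeff_mk,
        PowerSeries.coeff_C_mul, hh (j + 1), Finset.sum_range_succ, hh j,
        map_sum]
      have hcong : ∀ i ∈ Finset.range n,
          (PowerSeries.coeff (j + 1))
            (PowerSeries.C (1 / ((i : ℝ) * a + b) ^ m) * PowerSeries.X ^ (i + 1))
          = if i = j then 1 / ((j : ℝ) * a + b) ^ m else 0 := by
        intro i _
        rw [PowerSeries.coeff_C_mul, PowerSeries.coeff_X_pow]
        by_cases hij : i = j
        · simp [hij]
        · simp only [Nat.add_right_cancel_iff, hij, if_false, mul_zero]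
          rw [if_neg (fun hji => hij hji.symm), mul_zero]
      rw [Finset.sum_congr rfl hcong, Finset.sum_ite_eq' (Finset.range n) j]
      have hj : j ∈ Finset.range n := by simp; omega
      rw [if_pos hj]
      ring
end

section
/- Let H_n = ∑_{k=1}^{n} 1/k denote the harmonic numbers, with H_0 = 0. Define P_n(X) = n! · ∑_{k=1}^{n} X^k/k and Q_n(X) = n! (1−X) in ℚ[X]. Then: (i) for all n ≥ 3, P_n(X) = (n + (n−1)X) P_{n-1}(X) − (n−1)^2 X P_{n-2}(X), and the same recurrence holds for Q_n; (ii) for all n ≥ 0, (1−X) · (∑_{k≥1} H_k X^k) ≡ ∑_{k=1}^{n} X^k/k (mod X^{n+1}) in ℚ[[X]]. -/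
open Finset Polynomial

/-- Let `H n = ∑_{k=1}^n 1/k` be the harmonic numbers (`H 0 = 0`).  With
`P n = n! · ∑_{k=1}^n X^k/k` and `Q n = n!(1-X)` in `ℚ[X]`:
(i) for all `n ≥ 3` (written at index `n+3`),
`P_n = (n + (n-1)X) P_{n-1} - (n-1)² X P_{n-2}`, and the same for `Q`;
(ii) for all `n ≥ 0`, `(1-X) · ∑_{k≥1} H_k X^k ≡ ∑_{k=1}^n X^k/k (mod X^{n+1})` in `ℚ⟦X⟧`. -/
theorem statement14 (H : ℕ → ℚ) (hH : ∀ n, H n = ∑ k ∈ Finset.range n, 1 / ((k : ℚ) + 1))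
    (P Q : ℕ → Polynomial ℚ)
    (hP : ∀ n, P n = Polynomial.C ((n.factorial : ℚ)) *
      ∑ k ∈ Finset.range n, Polynomial.C (1 / ((k : ℚ) + 1)) * Polynomial.X ^ (k + 1))
    (hQ : ∀ n, Q n = Polynomial.C ((n.factorial : ℚ)) * (1 - Polynomial.X)) :
    (∀ n : ℕ,
      P (n + 3) = (Polynomial.C ((n : ℚ) + 3) +
            Polynomial.C ((n : ℚ) + 2) * Polynomial.X) * P (n + 2)
          - Polynomial.C (((n : ℚ) + 2) ^ 2) * Polynomial.X * P (n + 1) ∧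
      Q (n + 3) = (Polynomial.C ((n : ℚ) + 3) +
            Polynomial.C ((n : ℚ) + 2) * Polynomial.X) * Q (n + 2)
          - Polynomial.C (((n : ℚ) + 2) ^ 2) * Polynomial.X * Q (n + 1)) ∧
    (∀ n : ℕ, ∀ k ≤ n,
      PowerSeries.coeff (R := ℚ) k ((1 - PowerSeries.X) * PowerSeries.mk H) =
        PowerSeries.coeff (R := ℚ) k
          (∑ j ∈ Finset.range n,
            PowerSeries.C (R := ℚ) (1 / ((j : ℚ) + 1)) * PowerSeries.X ^ (j + 1))) := by
  constructor
  · intro n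
    have h2 : Polynomial.C ((n : ℚ) + 2) * Polynomial.C (1 / ((n : ℚ) + 2)) = 1 := by
      rw [← Polynomial.C_mul, mul_one_div, div_self (by positivity), Polynomial.C_1]
    have h3 : Polynomial.C ((n : ℚ) + 3) * Polynomial.C (1 / ((n : ℚ) + 3)) = 1 := by
      rw [← Polynomial.C_mul, mul_one_div, div_self (by positivity), Polynomial.C_1]
    have hf3 : ((n + 3).factorial : ℚ) = ((n : ℚ) + 3) * (((n : ℚ) + 2) * ((n + 1).factorial : ℚ)) := by
      rw [Nat.factorial_succ, Nat.factorial_succ]; push_cast; ring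
    have hf2 : ((n + 2).factorial : ℚ) = ((n : ℚ) + 2) * ((n + 1).factorial : ℚ) := by
      rw [Nat.factorial_succ]; push_cast; ring
    constructor
    · have ha : ((n : ℚ) + 1 + 1) = (n : ℚ) + 2 := by ring
      have hb : ((n : ℚ) + 2 + 1) = (n : ℚ) + 3 := by ring
      rw [hP, hP, hP, hf3, hf2, Finset.sum_range_succ, Finset.sum_range_succ,
        Finset.sum_range_succ]
      push_cast
      rw [ha, hb]
      simp only [map_mul, map_pow]
      linear_combination (Polynomial.C ((n:ℚ)+2) * Polynomial.C (((n+1).factorial : ℚ)) *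
        Polynomial.X ^ (n + 3)) * h3
        - (Polynomial.C ((n:ℚ)+2) * Polynomial.C (((n+1).factorial : ℚ)) *
        Polynomial.X ^ (n + 3)) * h2
    · rw [hQ, hQ, hQ, hf3, hf2]
      simp only [map_mul, map_pow]
      ring
  · intro n k hk
    have hsum : PowerSeries.coeff (R := ℚ) k
        (∑ j ∈ Finset.range n,
          PowerSeries.C (R := ℚ) (1 / ((j : ℚ) + 1)) * PowerSeries.X ^ (j + 1)) =
        ∑ j ∈ Finset.range n, if k = j + 1 then 1 / ((j : ℚ) + 1) else 0 := by
      rw [map_sum]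
      refine Finset.sum_congr rfl fun j _ => ?_
      simp [PowerSeries.coeff_X_pow]
    rw [hsum, sub_mul, one_mul, map_sub]
    cases k with
    | zero =>
      simp [hH]
    | succ m =>
      have hm : m ∈ Finset.range n := Finset.mem_range.mpr (by omega)
      rw [PowerSeries.coeff_succ_X_mul, PowerSeries.coeff_mk, PowerSeries.coeff_mk,
        hH, hH, Finset.sum_range_succ]
      simp only [add_left_inj]
      rw [Finset.sum_ite_eq, if_pos hm]
      ring
end

section
/- Let K be a field and let a, b, c, d, g₁, g₂, h₁, h₂, x ∈ K with c + d ≠ 0. Then the following identity of 2×2 matrices over K holds: [[a,b],[c,d]] · [[1,1],[1,0]] · [[g₁+h₁x, 1],[−h₁x, 0]] · [[g₂+h₂x, 1],[−g₁h₂x, 0]] = [[(a+b)/(c+d), 1],[1,0]] · [[(c+d)g₁+dh₁x, 1],[−((ad−bc)/(c+d))h₁x, 0]] · [[g₂+h₂x, 1],[−(c+d)g₁h₂x, 0]]. -/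
open Matrix

/-- The 2×2 matrix identity over a field `K` (with `c + d ≠ 0`) encoding how the
linear fractional transformation `β(t) = (at+b)/(ct+d)` transforms the first partial
quotients of the continued fraction. -/
theorem statement16 (K : Type*) [Field K] (a b c d g₁ g₂ h₁ h₂ x : K) (hcd : c + d ≠ 0) :
    (!![a, b; c, d] * !![1, 1; 1, 0] * !![g₁ + h₁ * x, 1; -(h₁ * x), 0] *
        !![g₂ + h₂ * x, 1; -(g₁ * h₂ * x), 0] : Matrix (Fin 2) (Fin 2) K) =
      !![(a + b) / (c + d), 1; 1, 0] *
        !![(c + d) * g₁ + d * h₁ * x, 1; -((a * d - b * c) / (c + d) * (h₁ * x)), 0] *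
        !![g₂ + h₂ * x, 1; -((c + d) * g₁ * h₂ * x), 0] := by
  simp only [Matrix.mul_fin_two]
  ext i j
  fin_cases i <;> fin_cases j <;>
    simp only [Matrix.cons_val_zero, Matrix.cons_val_one, Matrix.head_cons, Matrix.of_apply,
      Matrix.cons_val', Matrix.empty_val', Matrix.cons_val_fin_one, Matrix.head_fin_const,
        Fin.zero_eta, Fin.mk_one] <;>
    field_simp <;> ring
end

section
/- In ℚ[[X]], define P_n = (n+1)! and Q_n(X) = (n+1)! · ∑_{j=0}^{n} X^j/(j+1)!. Then for all n ≥ 0, (Q_n(X) − P_n) · (e^X + X − 1) ≡ (Q_n(X) + P_n) · (e^X − X − 1) (mod X^{n+2}), where e^X = ∑_{k≥0} X^k/k!. -/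
open Finset PowerSeries

/-- In `ℚ⟦X⟧`, with `P n = (n+1)!` and `Q n = (n+1)! · ∑_{j=0}^n X^j/(j+1)!`,
for all `n ≥ 0` we have
`(Q n - P n) · (e^X + X - 1) ≡ (Q n + P n) · (e^X - X - 1) (mod X^{n+2})`. -/
theorem statement17 (P Q : ℕ → PowerSeries ℚ)
    (hP : ∀ n, P n = PowerSeries.C (R := ℚ) (((n + 1).factorial : ℚ)))
    (hQ : ∀ n, Q n = PowerSeries.C (R := ℚ) (((n + 1).factorial : ℚ)) *
      ∑ j ∈ Finset.range (n + 1),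
        PowerSeries.C (R := ℚ) (1 / ((j + 1).factorial : ℚ)) * PowerSeries.X ^ j) :
    ∀ n : ℕ, ∀ k ≤ n + 1,
      PowerSeries.coeff (R := ℚ) k ((Q n - P n) * (PowerSeries.exp ℚ + PowerSeries.X - 1)) =
        PowerSeries.coeff (R := ℚ) k ((Q n + P n) * (PowerSeries.exp ℚ - PowerSeries.X - 1)) := by
  intro n k hk
  have key : PowerSeries.coeff (R := ℚ) k (Q n * PowerSeries.X) =
      PowerSeries.coeff (R := ℚ) k (P n * (PowerSeries.exp ℚ - 1)) := by
    rw [hP, hQ]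
    cases k with
    | zero =>
        simp [PowerSeries.coeff_zero_eq_constantCoeff, PowerSeries.exp]
    | succ k =>
        have hkn : k ≤ n := Nat.succ_le_succ_iff.mp hk
        rw [PowerSeries.coeff_succ_mul_X]
        simp only [map_mul, PowerSeries.coeff_C_mul, map_sum, PowerSeries.coeff_X_pow,
          map_sub, PowerSeries.coeff_exp, map_one, PowerSeries.coeff_one]
        rw [Finset.sum_eq_single k]
        · simp [Nat.succ_ne_zero]
        · intro j _ hj; simp [Ne.symm hj]
        · intro h; exact absurd (Finset.mem_range.mpr (Nat.lt_succ_of_le hkn)) h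
  have expand : (Q n - P n) * (PowerSeries.exp ℚ + PowerSeries.X - 1) =
      (Q n + P n) * (PowerSeries.exp ℚ - PowerSeries.X - 1) +
        2 * (Q n * PowerSeries.X - P n * (PowerSeries.exp ℚ - 1)) := by ring
  rw [expand, map_add]
  have : PowerSeries.coeff (R := ℚ) k
      (2 * (Q n * PowerSeries.X - P n * (PowerSeries.exp ℚ - 1))) = 0 := by
    rw [two_mul, map_add, map_sub, key]
    ring
  rw [this, add_zero]
end

section
/- Fix an integer N ≥ 1. In ℚ[[X]] let f_N = (∑_{n=0}^{∞} (−1)^n (N/(N+n)) X^n)^{-1} (the generating function ∑_{n≥0} c_{N,n} X^n/n! of the hypergeometric Cauchy numbers). Define sequences of polynomials p_n, q_n by p_{-1} = 1, q_{-1} = 0, p_0 = q_0 = 1, and for n ≥ 1: p_n(X) = (N+n) p_{n-1}(X) + b_n X p_{n-2}(X) and q_n(X) = (N+n) q_{n-1}(X) + b_n X q_{n-2}(X), where b_1 = N and, for k ≥ 1, b_{2k} = k^2 and b_{2k+1} = (N+k)^2. Then for all n ≥ 0, q_n(X) · f_N ≡ p_n(X) (mod X^{n+1}). -/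
open Finset PowerSeries

namespace St19

noncomputable def Pr (a : ℚ) (m : ℕ) : ℚ := ∏ i ∈ Finset.range m, (a + i)

lemma Pr_zero (a : ℚ) : Pr a 0 = 1 := by simp [Pr]

lemma Pr_succ (a : ℚ) (m : ℕ) : Pr a (m + 1) = Pr a m * (a + m) := by
  simp [Pr, Finset.prod_range_succ]

lemma Pr_succ' (a : ℚ) (m : ℕ) : Pr a (m + 1) = a * Pr (a + 1) m := by
  unfold Pr
  rw [Finset.prod_range_succ']
  rw [mul_comm]
  congr 1
  · norm_num
  · exact Finset.prod_congr rfl fun i _ => by push_cast; ring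

lemma Pr_pos (a : ℚ) (ha : 0 < a) (m : ℕ) : 0 < Pr a m := by
  apply Finset.prod_pos
  intro i _
  positivity

lemma Pr_shift (a : ℚ) (m : ℕ) : Pr a m * (a + m) = a * Pr (a + 1) m := by
  rw [← Pr_succ, Pr_succ']

lemma Pr_shift_div (a : ℚ) (m : ℕ) (ha : a ≠ 0) :
    Pr (a + 1) m = Pr a m * (a + m) / a := by
  rw [Pr_shift]; field_simp

def bb (N : ℕ) (n : ℕ) : ℚ :=
  if n = 1 then (N : ℚ) else if n % 2 = 0 then ((n / 2 : ℕ) : ℚ) ^ 2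
  else (((N + n / 2 : ℕ)) : ℚ) ^ 2

noncomputable def cc (N : ℕ) : ℕ → ℚ
  | 0 => (N : ℚ) / ((N : ℚ) + 1)
  | n + 1 => cc N n * bb N (n + 2) / ((N : ℚ) + (n : ℚ) + 2)

lemma cc_succ (N n : ℕ) : cc N (n + 1) = cc N n * bb N (n + 2) / ((N : ℚ) + (n : ℚ) + 2) := rfl

noncomputable def ww (N n m : ℕ) : ℚ :=
  (-1) ^ (n + m + 1) * cc N n * Pr (((n + 3) / 2 : ℕ) : ℚ) m * Pr (((N + (n + 2) / 2 : ℕ)) : ℚ) m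
    / (Pr (((N + n + 2 : ℕ)) : ℚ) m * Pr 1 m)

lemma bb_even (N k : ℕ) : bb N (2 * k + 2) = ((k : ℚ) + 1) ^ 2 := by
  simp only [bb, show ¬(2 * k + 2 = 1) by omega, if_false, show (2 * k + 2) % 2 = 0 by omega,
    if_true, show (2 * k + 2) / 2 = k + 1 by omega]
  push_cast; ring

lemma bb_odd (N k : ℕ) : bb N (2 * k + 3) = ((N : ℚ) + (k : ℚ) + 1) ^ 2 := by
  simp only [bb, show ¬(2 * k + 3 = 1) by omega, if_false, show ¬((2 * k + 3) % 2 = 0) by omega,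
    show N + (2 * k + 3) / 2 = N + k + 1 by omega]
  push_cast; ring

lemma neg_one_pow_two_mul_add (a b : ℕ) : ((-1 : ℚ)) ^ (2 * a + b) = (-1) ^ b := by
  rw [pow_add, pow_mul]; norm_num


lemma Pr_ne (a : ℚ) (ha : 0 < a) (m : ℕ) : Pr a m ≠ 0 := ne_of_gt (Pr_pos a ha m)

lemma cc_zero (N : ℕ) : cc N 0 = (N : ℚ) / ((N : ℚ) + 1) := rfl

lemma LI (N n : ℕ) (hN : 1 ≤ N) :
    ((N : ℚ) + (n : ℚ) + 2) * ww N (n + 1) 0 + bb N (n + 2) * ww N n 0 = 0 := by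
  have hd : ((N : ℚ) + (n : ℚ) + 2) ≠ 0 := by positivity
  unfold ww
  rw [cc_succ]
  simp only [Pr_zero]
  field_simp
  ring

lemma w0 (N m : ℕ) (hN : 1 ≤ N) :
    ww N 0 m = (-1) ^ (m + 1) * ((N : ℚ) / ((N : ℚ) + (m : ℚ) + 1)) := by
  have hN0 : (0 : ℚ) < (N : ℚ) := by exact_mod_cast hN
  unfold ww
  rw [show (0 + 3) / 2 = 1 from by norm_num, show N + (0 + 2) / 2 = N + 1 from by omega,
    show N + 0 + 2 = N + 2 from by omega, cc_zero, show (0 : ℕ) + m + 1 = m + 1 from by omega]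
  push_cast
  rw [show (N : ℚ) + 2 = ((N : ℚ) + 1) + 1 from by ring,
    Pr_shift_div ((N : ℚ) + 1) m (by positivity)]
  have h1 : Pr ((N : ℚ) + 1) m ≠ 0 := Pr_ne _ (by positivity) m
  have h2 : Pr (1 : ℚ) m ≠ 0 := Pr_ne _ (by norm_num) m
  have h3 : ((N : ℚ) + 1 + (m : ℚ)) ≠ 0 := by positivity
  have h4 : ((N : ℚ) + 1) ≠ 0 := by positivity
  have h5 : ((N : ℚ) + (m : ℚ) + 1) ≠ 0 := by positivity
  field_simp
  ring

lemma w1 (N m : ℕ) (hN : 1 ≤ N) :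
    ww N 1 m = (-1) ^ m *
      ((N : ℚ) * ((m : ℚ) + 1) / (((N : ℚ) + (m : ℚ) + 1) * ((N : ℚ) + (m : ℚ) + 2))) := by
  have hN0 : (0 : ℚ) < (N : ℚ) := by exact_mod_cast hN
  have hc1 : cc N 1 = cc N 0 * bb N 2 / ((N : ℚ) + ((0 : ℕ) : ℚ) + 2) := cc_succ N 0
  have hbb2 : bb N 2 = 1 := by norm_num [bb]
  unfold ww
  rw [show (1 + 3) / 2 = 2 from by norm_num, show N + (1 + 2) / 2 = N + 1 from by omega,
    show N + 1 + 2 = N + 3 from by omega, hc1, hbb2, cc_zero]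
  push_cast
  rw [show (N : ℚ) + 3 = ((N : ℚ) + 2) + 1 from by ring,
    Pr_shift_div ((N : ℚ) + 2) m (by positivity),
    show (N : ℚ) + 2 = ((N : ℚ) + 1) + 1 from by ring,
    Pr_shift_div ((N : ℚ) + 1) m (by positivity),
    show (2 : ℚ) = (1 : ℚ) + 1 from by norm_num,
    Pr_shift_div (1 : ℚ) m (by norm_num)]
  have h1 : Pr ((N : ℚ) + 1) m ≠ 0 := Pr_ne _ (by positivity) m
  have h2 : Pr (1 : ℚ) m ≠ 0 := Pr_ne _ (by norm_num) m
  have h3 : ((N : ℚ) + 1 + (m : ℚ)) ≠ 0 := by positivity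
  have h4 : ((N : ℚ) + 1 + 1 + (m : ℚ)) ≠ 0 := by positivity
  have h5 : ((N : ℚ) + (m : ℚ) + 1) ≠ 0 := by positivity
  have h6 : ((N : ℚ) + (m : ℚ) + 2) ≠ 0 := by positivity
  have h7 : ((N : ℚ) + 1) ≠ 0 := by positivity
  have h8 : ((N : ℚ) + 1 + 1) ≠ 0 := by positivity
  have h9 : ((1 : ℚ) + (m : ℚ)) ≠ 0 := by positivity
  field_simp
  ring

lemma LII_even (N k m : ℕ) (hN : 1 ≤ N) :
    ((N : ℚ) + ((2 * k : ℕ) : ℚ) + 2) * ww N (2 * k + 1) (m + 1)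
      + bb N (2 * k + 2) * ww N (2 * k) (m + 1) = ww N (2 * k + 2) m := by
  have hbe : bb N (2 * k + 2) = ((k : ℚ) + 1) ^ 2 := bb_even N k
  have hbo : bb N (2 * k + 3) = ((N : ℚ) + (k : ℚ) + 1) ^ 2 := bb_odd N k
  have hc1 : cc N (2 * k + 1) = cc N (2 * k) * bb N (2 * k + 2) / ((N : ℚ) + 2 * (k : ℚ) + 2) := by
    rw [cc_succ]; push_cast; ring
  have hc2 : cc N (2 * k + 2) = cc N (2 * k + 1) * bb N (2 * k + 3) / ((N : ℚ) + 2 * (k : ℚ) + 3) := by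
    have h : cc N (2 * k + 1 + 1) = cc N (2 * k + 1) * bb N (2 * k + 1 + 2)
        / ((N : ℚ) + ((2 * k + 1 : ℕ) : ℚ) + 2) := cc_succ N (2 * k + 1)
    rw [show 2 * k + 1 + 1 = 2 * k + 2 from by omega,
      show 2 * k + 1 + 2 = 2 * k + 3 from by omega] at h
    rw [h]; push_cast; ring
  unfold ww
  rw [show (2 * k + 1 + 3) / 2 = k + 2 from by omega,
    show N + (2 * k + 1 + 2) / 2 = N + k + 1 from by omega,
    show N + (2 * k + 1) + 2 = N + 2 * k + 3 from by omega,
    show (2 * k + 3) / 2 = k + 1 from by omega,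
    show N + (2 * k + 2) / 2 = N + k + 1 from by omega,
    show (2 * k + 2 + 3) / 2 = k + 2 from by omega,
    show N + (k + 2) = N + k + 2 from by omega,
    show N + (2 * k + 2) + 2 = N + 2 * k + 4 from by omega,
    show 2 * k + 1 + (m + 1) + 1 = 2 * (k + 1) + (m + 1) from by omega,
    show 2 * k + (m + 1) + 1 = 2 * (k + 1) + m from by omega,
    show 2 * k + 2 + m + 1 = 2 * (k + 1) + (m + 1) from by omega,
    neg_one_pow_two_mul_add, neg_one_pow_two_mul_add]
  push_cast
  rw [hc2, hc1, hbe, hbo]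
  rw [Pr_succ ((k : ℚ) + 2) m,
    Pr_succ' ((k : ℚ) + 1) m, show (k : ℚ) + 1 + 1 = (k : ℚ) + 2 from by ring,
    Pr_succ' ((N : ℚ) + (k : ℚ) + 1) m,
    show (N : ℚ) + (k : ℚ) + 1 + 1 = (N : ℚ) + (k : ℚ) + 2 from by ring,
    Pr_succ ((N : ℚ) + 2 * (k : ℚ) + 3) m,
    Pr_succ' ((N : ℚ) + 2 * (k : ℚ) + 2) m,
    show (N : ℚ) + 2 * (k : ℚ) + 2 + 1 = (N : ℚ) + 2 * (k : ℚ) + 3 from by ring,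
    show (N : ℚ) + 2 * (k : ℚ) + 4 = ((N : ℚ) + 2 * (k : ℚ) + 3) + 1 from by ring,
    Pr_shift_div ((N : ℚ) + 2 * (k : ℚ) + 3) m (by positivity),
    Pr_succ (1 : ℚ) m]
  have hP : Pr ((N : ℚ) + 2 * (k : ℚ) + 3) m ≠ 0 := Pr_ne _ (by positivity) m
  have hF : Pr (1 : ℚ) m ≠ 0 := Pr_ne _ (by norm_num) m
  have e1 : ((N : ℚ) + 2 * (k : ℚ) + 2) ≠ 0 := by positivity
  have e2 : ((N : ℚ) + 2 * (k : ℚ) + 3) ≠ 0 := by positivity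
  have e3 : ((N : ℚ) + 2 * (k : ℚ) + 3 + (m : ℚ)) ≠ 0 := by positivity
  have e4 : ((1 : ℚ) + (m : ℚ)) ≠ 0 := by positivity
  field_simp
  ring

lemma LII_odd (N k m : ℕ) (hN : 1 ≤ N) :
    ((N : ℚ) + ((2 * k + 1 : ℕ) : ℚ) + 2) * ww N (2 * k + 2) (m + 1)
      + bb N (2 * k + 3) * ww N (2 * k + 1) (m + 1) = ww N (2 * k + 3) m := by
  have hbo : bb N (2 * k + 3) = ((N : ℚ) + (k : ℚ) + 1) ^ 2 := bb_odd N k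
  have hbe2 : bb N (2 * k + 4) = ((k : ℚ) + 2) ^ 2 := by
    have h := bb_even N (k + 1)
    rw [show 2 * (k + 1) + 2 = 2 * k + 4 from by omega] at h
    rw [h]; push_cast; ring
  have hc1 : cc N (2 * k + 2) = cc N (2 * k + 1) * bb N (2 * k + 3) / ((N : ℚ) + 2 * (k : ℚ) + 3) := by
    have h : cc N (2 * k + 1 + 1) = cc N (2 * k + 1) * bb N (2 * k + 1 + 2)
        / ((N : ℚ) + ((2 * k + 1 : ℕ) : ℚ) + 2) := cc_succ N (2 * k + 1)
    rw [show 2 * k + 1 + 1 = 2 * k + 2 from by omega,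
      show 2 * k + 1 + 2 = 2 * k + 3 from by omega] at h
    rw [h]; push_cast; ring
  have hc2 : cc N (2 * k + 3) = cc N (2 * k + 2) * bb N (2 * k + 4) / ((N : ℚ) + 2 * (k : ℚ) + 4) := by
    have h : cc N (2 * k + 2 + 1) = cc N (2 * k + 2) * bb N (2 * k + 2 + 2)
        / ((N : ℚ) + ((2 * k + 2 : ℕ) : ℚ) + 2) := cc_succ N (2 * k + 2)
    rw [show 2 * k + 2 + 1 = 2 * k + 3 from by omega,
      show 2 * k + 2 + 2 = 2 * k + 4 from by omega] at h
    rw [h]; push_cast; ring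
  unfold ww
  rw [show (2 * k + 2 + 3) / 2 = k + 2 from by omega,
    show N + (2 * k + 2 + 2) / 2 = N + k + 2 from by omega,
    show N + (2 * k + 2) + 2 = N + 2 * k + 4 from by omega,
    show (2 * k + 1 + 3) / 2 = k + 2 from by omega,
    show N + (2 * k + 1 + 2) / 2 = N + k + 1 from by omega,
    show N + (2 * k + 1) + 2 = N + 2 * k + 3 from by omega,
    show (2 * k + 3 + 3) / 2 = k + 3 from by omega,
    show N + (k + 2) = N + k + 2 from by omega,
    show N + (2 * k + 3) + 2 = N + 2 * k + 5 from by omega,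
    show 2 * k + 2 + (m + 1) + 1 = 2 * (k + 2) + m from by omega,
    show 2 * k + 1 + (m + 1) + 1 = 2 * (k + 1) + (m + 1) from by omega,
    show 2 * k + 3 + m + 1 = 2 * (k + 2) + m from by omega,
    neg_one_pow_two_mul_add, neg_one_pow_two_mul_add]
  push_cast
  rw [hc2, hc1, hbo, hbe2]
  rw [Pr_succ' ((k : ℚ) + 2) m, show (k : ℚ) + 2 + 1 = (k : ℚ) + 3 from by ring,
    Pr_succ ((N : ℚ) + (k : ℚ) + 2) m,
    Pr_succ' ((N : ℚ) + (k : ℚ) + 1) m,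
    show (N : ℚ) + (k : ℚ) + 1 + 1 = (N : ℚ) + (k : ℚ) + 2 from by ring,
    Pr_succ ((N : ℚ) + 2 * (k : ℚ) + 4) m,
    Pr_succ' ((N : ℚ) + 2 * (k : ℚ) + 3) m,
    show (N : ℚ) + 2 * (k : ℚ) + 3 + 1 = (N : ℚ) + 2 * (k : ℚ) + 4 from by ring,
    show (N : ℚ) + 2 * (k : ℚ) + 5 = ((N : ℚ) + 2 * (k : ℚ) + 4) + 1 from by ring,
    Pr_shift_div ((N : ℚ) + 2 * (k : ℚ) + 4) m (by positivity),
    Pr_succ (1 : ℚ) m]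
  have hP : Pr ((N : ℚ) + 2 * (k : ℚ) + 4) m ≠ 0 := Pr_ne _ (by positivity) m
  have hF : Pr (1 : ℚ) m ≠ 0 := Pr_ne _ (by norm_num) m
  have e1 : ((N : ℚ) + 2 * (k : ℚ) + 3) ≠ 0 := by positivity
  have e2 : ((N : ℚ) + 2 * (k : ℚ) + 4) ≠ 0 := by positivity
  have e3 : ((N : ℚ) + 2 * (k : ℚ) + 4 + (m : ℚ)) ≠ 0 := by positivity
  have e4 : ((1 : ℚ) + (m : ℚ)) ≠ 0 := by positivity
  field_simp
  ring

lemma LII (N n m : ℕ) (hN : 1 ≤ N) :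
    ((N : ℚ) + (n : ℚ) + 2) * ww N (n + 1) (m + 1) + bb N (n + 2) * ww N n (m + 1)
      = ww N (n + 2) m := by
  rcases Nat.even_or_odd n with ⟨k, rfl⟩ | ⟨k, rfl⟩
  · rw [show k + k = 2 * k from by omega]
    exact LII_even N k m hN
  · exact LII_odd N k m hN

end St19

/-- Convergents of the more complicated continued fraction expansion of the
generating function `f_N = (∑_n (-1)^n (N/(N+n)) X^n)⁻¹` of the hypergeometric Cauchy
numbers.  The sequences `p, q` are indexed so that `p m`, `q m` denote `p_{m-1}`, `q_{m-1}`: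
`p 0 = p_{-1} = 1`, `q 0 = q_{-1} = 0`, `p 1 = p_0 = 1`, `q 1 = q_0 = 1`, and for `n ≥ 1`
(written at shifted index `n+2`): `p_n = (N+n) p_{n-1} + b_n X p_{n-2}`, with `b_1 = N`,
`b_{2k} = k²`, `b_{2k+1} = (N+k)²` for `k ≥ 1`.  Then `q_n · f_N ≡ p_n (mod X^{n+1})`. -/
theorem statement19 (N : ℕ) (hN : 1 ≤ N)
    (f : PowerSeries ℚ)
    (hf : f = (PowerSeries.mk fun n => (-1) ^ n * ((N : ℚ) / ((N : ℚ) + n)))⁻¹)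
    (b : ℕ → ℚ)
    (hb1 : b 1 = N)
    (hbeven : ∀ k : ℕ, 1 ≤ k → b (2 * k) = (k : ℚ) ^ 2)
    (hbodd : ∀ k : ℕ, 1 ≤ k → b (2 * k + 1) = ((N : ℚ) + k) ^ 2)
    (p q : ℕ → PowerSeries ℚ)
    (hp0 : p 0 = 1) (hq0 : q 0 = 0) (hp1 : p 1 = 1) (hq1 : q 1 = 1)
    (hp : ∀ n : ℕ, p (n + 2) = PowerSeries.C ((N : ℚ) + n + 1) * p (n + 1)
      + PowerSeries.C (b (n + 1)) * PowerSeries.X * p n)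
    (hq : ∀ n : ℕ, q (n + 2) = PowerSeries.C ((N : ℚ) + n + 1) * q (n + 1)
      + PowerSeries.C (b (n + 1)) * PowerSeries.X * q n) :
    ∀ n : ℕ, ∀ k ≤ n,
      PowerSeries.coeff k (q (n + 1) * f) = PowerSeries.coeff k (p (n + 1)) := by

  intro n k hkn
  have hN0 : (N : ℚ) ≠ 0 := Nat.cast_ne_zero.mpr (by omega)
  set g : PowerSeries ℚ := PowerSeries.mk fun j => (-1) ^ j * ((N : ℚ) / ((N : ℚ) + j)) with hg
  have hfg : g * f = 1 := by
    rw [hf]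
    refine PowerSeries.mul_inv_cancel _ ?_
    rw [hg, PowerSeries.constantCoeff_mk]
    norm_num [hN0]
  have hbb : ∀ j : ℕ, b (j + 1) = St19.bb N (j + 1) := by
    intro j
    rcases Nat.even_or_odd (j + 1) with ⟨t, ht⟩ | ⟨t, ht⟩
    · have ht1 : 1 ≤ t := by omega
      rw [show j + 1 = 2 * t from by omega, hbeven t ht1]
      simp [St19.bb, show ¬(2 * t = 1) from by omega, show (2 * t) % 2 = 0 from by omega,
        show 2 * t / 2 = t from by omega]
    · rcases Nat.eq_zero_or_pos t with rfl | ht1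
      · rw [show j + 1 = 1 from by omega, hb1]
        simp [St19.bb]
      · rw [show j + 1 = 2 * t + 1 from by omega, hbodd t ht1]
        simp only [St19.bb, show ¬(2 * t + 1 = 1) from by omega, if_false,
          show ¬((2 * t + 1) % 2 = 0) from by omega, show N + (2 * t + 1) / 2 = N + t from by omega]
        push_cast; ring
  have key : ∀ n : ℕ,
      p (n + 1) * g = q (n + 1) + X ^ (n + 1) * PowerSeries.mk (St19.ww N n)
      ∧ p (n + 2) * g = q (n + 2) + X ^ (n + 2) * PowerSeries.mk (St19.ww N (n + 1)) := by
    intro n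
    induction n with
    | zero =>
      constructor
      · show p 1 * g = q 1 + X ^ 1 * PowerSeries.mk (St19.ww N 0)
        rw [hp1, hq1, one_mul, pow_one]
        ext j
        rcases j with _ | m
        · rw [hg, PowerSeries.coeff_mk, map_add (PowerSeries.coeff _), PowerSeries.coeff_zero_X_mul,
            PowerSeries.coeff_one]
          norm_num [hN0]
        · rw [hg, PowerSeries.coeff_mk, map_add (PowerSeries.coeff _), PowerSeries.coeff_succ_X_mul,
            PowerSeries.coeff_mk, PowerSeries.coeff_one, if_neg (Nat.succ_ne_zero m),
            St19.w0 N m hN]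
          push_cast
          ring
      · show p 2 * g = q 2 + X ^ 2 * PowerSeries.mk (St19.ww N 1)
        have hp2 := hp 0
        have hq2 := hq 0
        rw [hp0, hp1, hb1, mul_one, mul_one] at hp2
        rw [hq0, hq1, hb1, mul_one, mul_zero, add_zero] at hq2
        rw [hp2, hq2, add_mul, mul_assoc]
        ext j
        rcases j with _ | _ | m
        · rw [map_add (PowerSeries.coeff _), map_add (PowerSeries.coeff _), PowerSeries.coeff_C_mul, PowerSeries.coeff_C_mul,
            PowerSeries.coeff_zero_X_mul, PowerSeries.coeff_X_pow_mul' _ 2 0, if_neg (by omega),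
            hg, PowerSeries.coeff_mk, PowerSeries.coeff_C]
          norm_num [hN0]
        · rw [map_add (PowerSeries.coeff _), map_add (PowerSeries.coeff _), PowerSeries.coeff_C_mul, PowerSeries.coeff_C_mul,
            PowerSeries.coeff_succ_X_mul, PowerSeries.coeff_X_pow_mul' _ 2 1, if_neg (by omega),
            hg, PowerSeries.coeff_mk, PowerSeries.coeff_mk, PowerSeries.coeff_C]
          have h1 : ((N : ℚ) + 1) ≠ 0 := by positivity
          push_cast
          field_simp
          ring
        · rw [map_add (PowerSeries.coeff _), map_add (PowerSeries.coeff _), PowerSeries.coeff_C_mul, PowerSeries.coeff_C_mul,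
            PowerSeries.coeff_succ_X_mul, hg, PowerSeries.coeff_mk, PowerSeries.coeff_mk,
            PowerSeries.coeff_C, if_neg (by omega),
            show m + 1 + 1 = m + 2 from rfl, PowerSeries.coeff_X_pow_mul' _ 2 (m + 2),
            if_pos (by omega), show m + 2 - 2 = m from by omega, PowerSeries.coeff_mk,
            St19.w1 N m hN]
          have h1 : ((N : ℚ) + (m : ℚ) + 1) ≠ 0 := by positivity
          have h2 : ((N : ℚ) + (m : ℚ) + 2) ≠ 0 := by positivity
          push_cast
          field_simp
          ring
    | succ n ih =>
      refine ⟨ih.2, ?_⟩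
      show p (n + 3) * g = q (n + 3) + X ^ (n + 3) * PowerSeries.mk (St19.ww N (n + 2))
      have hp3 := hp (n + 1)
      have hq3 := hq (n + 1)
      have hcast : (N : ℚ) + ((n + 1 : ℕ) : ℚ) + 1 = (N : ℚ) + (n : ℚ) + 2 := by push_cast; ring
      rw [hcast, hbb (n + 1)] at hp3 hq3
      have hWX : PowerSeries.C ((N : ℚ) + (n : ℚ) + 2) * PowerSeries.mk (St19.ww N (n + 1))
          + PowerSeries.C (St19.bb N (n + 2)) * PowerSeries.mk (St19.ww N n)
          = X * PowerSeries.mk (St19.ww N (n + 2)) := by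
        ext j
        rcases j with _ | m
        · rw [map_add (PowerSeries.coeff _), PowerSeries.coeff_C_mul, PowerSeries.coeff_C_mul,
            PowerSeries.coeff_zero_X_mul, PowerSeries.coeff_mk, PowerSeries.coeff_mk]
          exact St19.LI N n hN
        · rw [map_add (PowerSeries.coeff _), PowerSeries.coeff_C_mul, PowerSeries.coeff_C_mul,
            PowerSeries.coeff_succ_X_mul, PowerSeries.coeff_mk, PowerSeries.coeff_mk,
            PowerSeries.coeff_mk]
          exact St19.LII N n m hN
      rw [hp3, hq3]
      linear_combination (PowerSeries.C ((N : ℚ) + (n : ℚ) + 2)) * ih.2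
        + (PowerSeries.C (St19.bb N (n + 2)) * X) * ih.1 + X ^ (n + 2) * hWX
  obtain ⟨h1, -⟩ := key n
  have h2 : q (n + 1) * f = p (n + 1) - X ^ (n + 1) * (PowerSeries.mk (St19.ww N n) * f) := by
    linear_combination (-f) * h1 + p (n + 1) * hfg
  rw [h2, map_sub, PowerSeries.coeff_X_pow_mul' _ (n + 1) k, if_neg (by omega), sub_zero]
end
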